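/- arXiv:2308.06627 — 8 statements merged into one kernel-verified Lean document; each statement's English description precedes it below -/
import Mathlib

section
/- Let J be a Jacobi matrix of order n, let l ∈ ℝ, and let p and q be the characteristic polynomials of J and of J^{(1)} respectively. Then for every z ∈ ℂ one has det(zI_n − J_{l,×}) = (1+il)·p(z) − i·l·z·q(z). -/
open Matrix Polynomial

/-- A Jacobi matrix: real symmetric tridiagonal with positive off-diagonal entries. -/
def IsJacobi {N : ℕ} (J : Matrix (Fin N) (Fin N) ℝ) : Prop :=
  (∀ i j, J i j = J j i) ∧
  (∀ i j : Fin N, (i : ℕ) + 1 < (j : ℕ) → J i j = 0) ∧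
  (∀ i j : Fin N, (i : ℕ) + 1 = (j : ℕ) → 0 < J i j)

/-- The multiplicative perturbation `J_{l,×} = (I + i l e₁ e₁*) J`. -/
noncomputable def mulPert {N : ℕ} [NeZero N] (l : ℝ) (J : Matrix (Fin N) (Fin N) ℝ) :
    Matrix (Fin N) (Fin N) ℂ :=
  (1 + (Complex.I * l) • Matrix.single 0 0 (1 : ℂ)) * J.map (fun x => (x : ℂ))

/-- det(zI − J_{l,×}) = (1+il)·p(z) − i·l·z·q(z), where p, q are the
characteristic polynomials of J and of J⁽¹⁾ (J with first row and column deleted). -/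
theorem stmt0 (n : ℕ) (J : Matrix (Fin (n + 1)) (Fin (n + 1)) ℝ) (hJ : IsJacobi J) (l : ℝ)
    (z : ℂ) :
    (z • (1 : Matrix (Fin (n + 1)) (Fin (n + 1)) ℂ) - mulPert l J).det =
      (1 + Complex.I * l) *
          (z • (1 : Matrix (Fin (n + 1)) (Fin (n + 1)) ℂ) - J.map (fun x => (x : ℂ))).det
        - Complex.I * l * z *
          (z • (1 : Matrix (Fin n) (Fin n) ℂ)
            - (J.submatrix Fin.succ Fin.succ).map (fun x => (x : ℂ))).det := by
  set A : Matrix (Fin (n + 1)) (Fin (n + 1)) ℂ :=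
    z • (1 : Matrix (Fin (n + 1)) (Fin (n + 1)) ℂ) - J.map (fun x => (x : ℂ)) with hA
  have hM : z • (1 : Matrix (Fin (n + 1)) (Fin (n + 1)) ℂ) - mulPert l J =
      A.updateRow 0 ((1 + Complex.I * l) • (A 0) +
        (-(Complex.I * l * z)) • (Pi.single (0 : Fin (n + 1)) (1:ℂ) : Fin (n+1) → ℂ)) := by
    ext i j
    rcases eq_or_ne i 0 with rfl | hi
    · simp only [updateRow_self, Pi.add_apply, Pi.smul_apply, smul_eq_mul, hA,
        Matrix.sub_apply, Matrix.smul_apply, Matrix.one_apply, Matrix.map_apply,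
        mulPert, Matrix.add_mul, Matrix.one_mul, Matrix.smul_mul]
      have hstd : ((Matrix.single (0 : Fin (n+1)) (0 : Fin (n+1)) (1:ℂ)) *
          J.map (fun x => (x : ℂ)) : Matrix (Fin (n+1)) (Fin (n+1)) ℂ) 0 j = (J 0 j : ℂ) := by
        simp [Matrix.mul_apply, Matrix.single, Matrix.map_apply]
      simp only [Matrix.add_apply, Matrix.smul_apply, hstd, smul_eq_mul, Matrix.map_apply]
      rcases eq_or_ne j 0 with rfl | hj
      · simp [Pi.single_apply]; ring
      · simp [Pi.single_apply, hj, Ne.symm hj]; ring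
    · simp only [updateRow_ne hi, hA, Matrix.sub_apply, Matrix.smul_apply, Matrix.one_apply,
        Matrix.map_apply, mulPert, Matrix.add_mul, Matrix.one_mul, Matrix.smul_mul]
      have hstd : ((Matrix.single (0 : Fin (n+1)) (0 : Fin (n+1)) (1:ℂ)) *
          J.map (fun x => (x : ℂ)) : Matrix (Fin (n+1)) (Fin (n+1)) ℂ) i j = 0 := by
        simp [Matrix.mul_apply, Matrix.single, Ne.symm hi]
      simp only [Matrix.add_apply, Matrix.smul_apply, hstd, smul_eq_mul, Matrix.map_apply,
        mul_zero, add_zero, Matrix.smul_apply]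

  rw [hM, Matrix.det_updateRow_add, Matrix.det_updateRow_smul, Matrix.det_updateRow_smul,
    Matrix.updateRow_eq_self]
  have hsingle : (A.updateRow 0 (Pi.single (0 : Fin (n + 1)) (1:ℂ) : Fin (n+1) → ℂ)).det =
      (z • (1 : Matrix (Fin n) (Fin n) ℂ)
        - (J.submatrix Fin.succ Fin.succ).map (fun x => (x : ℂ))).det := by
    rw [Matrix.det_succ_row_zero]
    rw [Fintype.sum_eq_single (0 : Fin (n + 1))]
    · have h00 : (A.updateRow 0 (Pi.single (0 : Fin (n + 1)) (1:ℂ) : Fin (n+1) → ℂ)) 0 0 = 1 := by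
        simp
      rw [h00]
      have hsub : (A.updateRow 0 (Pi.single (0 : Fin (n + 1)) (1:ℂ) : Fin (n+1) → ℂ)).submatrix Fin.succ
          ((0 : Fin (n+1)).succAbove) =
          z • (1 : Matrix (Fin n) (Fin n) ℂ)
            - (J.submatrix Fin.succ Fin.succ).map (fun x => (x : ℂ)) := by
        ext i j
        simp [Matrix.submatrix_apply, Fin.succAbove_zero, Matrix.updateRow_ne
          (Fin.succ_ne_zero i), hA, Matrix.one_apply, Fin.succ_inj]
      rw [hsub]
      simp
    · intro j hj
      have : (A.updateRow 0 (Pi.single (0 : Fin (n + 1)) (1:ℂ) : Fin (n+1) → ℂ)) 0 j = 0 := by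
        simp [Pi.single_apply, hj]
      rw [this]; ring
  rw [hsingle]
  ring
end

section
/- Let J be a Jacobi matrix of order n, l ∈ ℝ, let λ_1,…,λ_n be the eigenvalues of J and z_1,…,z_n the eigenvalues of J_{l,×}, each counted with algebraic multiplicity. Then for every z ∈ ℂ, ∏_{j=1}^n (z − λ_j) = ½·∏_{j=1}^n (z − z_j) + ½·∏_{j=1}^n (z − \bar{z}_j); equivalently, the real parts of the coefficients of the characteristic polynomial of J_{l,×} are exactly the coefficients of the characteristic polynomial of J. In particular Σ_{j=1}^n λ_j² = (Σ_{j=1}^n Re z_j)² − Σ_{j≠k} Re(z_j z_k). -/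
open Matrix Polynomial

noncomputable def q0 {N : ℕ} [NeZero N] (J : Matrix (Fin N) (Fin N) ℝ) : ℝ[X] :=
  (Matrix.updateRow (charmatrix J) 0 (fun j => C (J 0 j))).det

lemma key {N : ℕ} [NeZero N] (l : ℝ) (J : Matrix (Fin N) (Fin N) ℝ) :
    (mulPert l J).charpoly =
      (J.charpoly).map Complex.ofRealHom
        - C (Complex.I * l) * (q0 J).map Complex.ofRealHom := by
  classical
  set B : Matrix (Fin N) (Fin N) ℂ := J.map (fun x => (x : ℂ)) with hB
  have hcm : charmatrix (mulPert l J) =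
      Matrix.updateRow (charmatrix B) 0
        (fun j => charmatrix B 0 j + (-(C (Complex.I * l))) * C (B 0 j)) := by
    ext i j
    have hM : mulPert l J i j = B i j + (if i = 0 then (Complex.I * l) * B 0 j else 0) := by
      simp only [mulPert, Matrix.add_mul, Matrix.smul_mul, Matrix.one_mul, Matrix.add_apply,
        Matrix.smul_apply, Matrix.mul_apply, Matrix.single, Matrix.of_apply, ite_and,
        smul_eq_mul, boole_mul, ite_mul, zero_mul, one_mul, Finset.sum_ite_eq,
        Finset.mem_univ, if_true, hB, Matrix.map_apply, mul_ite, mul_zero]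
      rcases eq_or_ne i 0 with h0 | h0
      · simp [h0, Matrix.one_apply, add_mul, ite_mul, Finset.sum_add_distrib,
          Finset.sum_ite_eq, Finset.sum_ite_eq']
      · simp [h0, Ne.symm h0, Matrix.one_apply, add_mul, ite_mul, Finset.sum_add_distrib,
          Finset.sum_ite_eq, Finset.sum_ite_eq']
    by_cases hi : i = 0
    · subst hi
      by_cases hij : (0 : Fin N) = j
      · subst hij
        simp [charmatrix_apply_eq, hM, Matrix.updateRow_self]
        ring
      · rw [Matrix.updateRow_self]
        simp [charmatrix_apply_ne _ _ _ hij, hM]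
        ring
    · rw [Matrix.updateRow_ne hi]
      by_cases hij : i = j
      · subst hij; simp [charmatrix_apply_eq, hM, hi]
      · simp [charmatrix_apply_ne _ _ _ hij, hM, hi]
  have hB' : B = J.map Complex.ofRealHom := rfl
  have hrw : Matrix.updateRow (charmatrix B) 0
        (fun j => charmatrix B 0 j + (-(C (Complex.I * l))) * C (B 0 j))
      = Matrix.updateRow (charmatrix B) 0
        (charmatrix B 0 + (-(C (Complex.I * l))) • fun j => C (B 0 j)) := rfl
  have hq : Matrix.det (Matrix.updateRow (charmatrix B) 0 (fun j => C (B 0 j)))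
      = (q0 J).map Complex.ofRealHom := by
    have h1 : (Matrix.updateRow (charmatrix J) 0 fun j => C (J 0 j)).map
          (Polynomial.map Complex.ofRealHom)
        = Matrix.updateRow (charmatrix B) 0 (fun j => C (B 0 j)) := by
      ext i j
      rcases eq_or_ne i 0 with h | h
      · simp [h, hB']
      · simp [h, hB', charmatrix_map]
    rw [q0, ← Polynomial.coe_mapRingHom, RingHom.map_det, RingHom.mapMatrix_apply,
      Polynomial.coe_mapRingHom, h1]
  rw [Matrix.charpoly, hcm, hrw, Matrix.det_updateRow_add, Matrix.det_updateRow_smul,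
    Matrix.updateRow_eq_self, hq, ← Matrix.charpoly, hB', charpoly_map]
  ring

lemma coeff_aux (c : ℂ) (Q : ℂ[X]) (k : ℕ) :
    ((1 - C c * X) * Q).coeff (k + 1) = Q.coeff (k + 1) - c * Q.coeff k := by
  simp [sub_mul, mul_assoc, Polynomial.coeff_X_mul]

lemma coeff_aux0 (c : ℂ) (Q : ℂ[X]) :
    ((1 - C c * X) * Q).coeff 0 = Q.coeff 0 := by
  simp [Polynomial.mul_coeff_zero]

lemma prod_coeffs {ι : Type*} [DecidableEq ι] (f : ι → ℂ) (s : Finset ι) :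
    (∏ i ∈ s, (1 - C (f i) * X)).coeff 0 = 1 ∧
    (∏ i ∈ s, (1 - C (f i) * X)).coeff 1 = -∑ i ∈ s, f i ∧
    (∏ i ∈ s, (1 - C (f i) * X)).coeff 2 * 2 = ∑ i ∈ s, ∑ k ∈ s.erase i, f i * f k := by
  induction s using Finset.induction_on with
  | empty => simp [Polynomial.coeff_one]
  | @insert a s ha ih =>
    obtain ⟨h0, h1, h2⟩ := ih
    set Q := ∏ i ∈ s, (1 - C (f i) * X) with hQ
    rw [Finset.prod_insert ha]
    have e1 := coeff_aux (f a) Q 0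
    have e2 := coeff_aux (f a) Q 1
    norm_num at e1 e2
    have hD : ∑ i ∈ insert a s, ∑ k ∈ (insert a s).erase i, f i * f k
        = (∑ k ∈ s, f a * f k) + ∑ i ∈ s, (f i * f a + ∑ k ∈ s.erase i, f i * f k) := by
      rw [Finset.sum_insert ha, Finset.erase_insert ha]
      congr 1
      refine Finset.sum_congr rfl fun i hi => ?_
      rw [Finset.erase_insert_of_ne (ne_of_mem_of_not_mem hi ha).symm, Finset.sum_insert
        (fun h => ha (Finset.mem_of_mem_erase h))]
    refine ⟨by rw [coeff_aux0, h0], by rw [e1, h0, h1, Finset.sum_insert ha]; ring, ?_⟩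
    have h2' : ∑ x ∈ s, f x * ∑ i ∈ s.erase x, f i = Q.coeff 2 * 2 := by
      rw [h2]; simp [Finset.mul_sum]
    rw [e2, hD]
    simp only [Finset.sum_add_distrib, ← Finset.mul_sum, ← Finset.sum_mul]
    rw [h2', h1]
    ring


/-- with λ_j the eigenvalues of J and z_j the eigenvalues of J_{l,×}
(with algebraic multiplicity): ∏ (z−λ_j) = ½∏(z−z_j) + ½∏(z−z̄_j) for all z ∈ ℂ;
equivalently the real parts of the coefficients of the characteristic polynomial of
J_{l,×} are the coefficients of that of J; in particular
Σ λ_j² = (Σ Re z_j)² − Σ_{j≠k} Re(z_j z_k). -/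
theorem stmt2 (n : ℕ) (J : Matrix (Fin (n + 1)) (Fin (n + 1)) ℝ) (hJ : IsJacobi J) (l : ℝ)
    (z : Fin (n + 1) → ℂ) (lam : Fin (n + 1) → ℝ)
    (hz : (mulPert l J).charpoly = ∏ j, (X - C (z j)))
    (hlam : J.charpoly = ∏ j, (X - C (lam j))) :
    (∀ w : ℂ, (∏ j, (w - (lam j : ℂ))) =
        (1 / 2) * ∏ j, (w - z j) + (1 / 2) * ∏ j, (w - (starRingEnd ℂ) (z j))) ∧
    (∀ k : ℕ, (((mulPert l J).charpoly).coeff k).re = (J.charpoly).coeff k) ∧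
    (∑ j, (lam j) ^ 2 =
      (∑ j, (z j).re) ^ 2 - ∑ j, ∑ k ∈ Finset.univ.erase j, (z j * z k).re) := by
  classical
  have hkey := key l J
  set P : ℂ[X] := (mulPert l J).charpoly with hP
  set phat : ℂ[X] := (J.charpoly).map Complex.ofRealHom with hphat
  set qhat : ℂ[X] := (q0 J).map Complex.ofRealHom with hqhat
  have hreal : ∀ r : ℝ[X],
      (r.map Complex.ofRealHom).map (starRingEnd ℂ) = r.map Complex.ofRealHom := by
    intro r
    rw [Polynomial.map_map]
    congr 1
    ext x
    simp [Complex.conj_ofReal]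
  have hconj : P.map (starRingEnd ℂ) = phat + C (Complex.I * l) * qhat := by
    rw [hkey, Polynomial.map_sub, Polynomial.map_mul, map_C, hphat, hqhat, hreal, hreal]
    have h2 : (starRingEnd ℂ) (Complex.I * l) = -(Complex.I * l) := by simp
    rw [h2, Polynomial.C_neg]
    ring
  have hsum2 : P + P.map (starRingEnd ℂ) = 2 * phat := by rw [hconj, hkey]; ring
  have hPconj : P.map (starRingEnd ℂ) = ∏ j, (X - C ((starRingEnd ℂ) (z j))) := by
    rw [hz, Polynomial.map_prod]
    simp
  have hphat' : phat = ∏ j, (X - C ((lam j : ℂ))) := by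
    rw [hphat, hlam, Polynomial.map_prod]
    simp
  have part1 : ∀ w : ℂ, (∏ j, (w - (lam j : ℂ))) =
      (1 / 2) * ∏ j, (w - z j) + (1 / 2) * ∏ j, (w - (starRingEnd ℂ) (z j)) := by
    intro w
    have e1 : Polynomial.eval w P = ∏ j, (w - z j) := by
      rw [hz]; simp [Polynomial.eval_prod]
    have e2 : Polynomial.eval w (P.map (starRingEnd ℂ)) = ∏ j, (w - (starRingEnd ℂ) (z j)) := by
      rw [hPconj]; simp [Polynomial.eval_prod]
    have e3 : Polynomial.eval w phat = ∏ j, (w - (lam j : ℂ)) := by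
      rw [hphat']; simp [Polynomial.eval_prod]
    have h := congrArg (Polynomial.eval w) hsum2
    rw [Polynomial.eval_add, Polynomial.eval_mul, e1, e2, e3] at h
    simp only [Polynomial.eval_ofNat] at h
    linear_combination (-1/2 : ℂ) * h
  have part2 : ∀ k : ℕ, ((P).coeff k).re = (J.charpoly).coeff k := by
    intro k
    rw [hkey, Polynomial.coeff_sub, Polynomial.coeff_C_mul, hphat, hqhat]
    simp [Polynomial.coeff_map, Complex.sub_re, Complex.mul_re, Complex.I_re, Complex.I_im,
      Complex.ofReal_re, Complex.ofReal_im]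
  refine ⟨part1, part2, ?_⟩
  -- reversed-polynomial identity
  have hptw : ∀ t : ℂ, (∏ j, (1 - (lam j : ℂ) * t)) =
      (1/2) * ∏ j, (1 - z j * t) + (1/2) * ∏ j, (1 - (starRingEnd ℂ) (z j) * t) := by
    intro t
    rcases eq_or_ne t 0 with rfl | ht
    · norm_num
    · have hg : ∀ g : Fin (n+1) → ℂ,
          (∏ j, (1 - g j * t)) = t ^ (n+1) * ∏ j, (t⁻¹ - g j) := by
        intro g
        calc (∏ j, (1 - g j * t)) = ∏ j, (t * (t⁻¹ - g j)) := by
              refine Finset.prod_congr rfl fun j _ => ?_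
              rw [mul_sub, mul_inv_cancel₀ ht]
              ring
           _ = (∏ _j : Fin (n+1), t) * ∏ j, (t⁻¹ - g j) := Finset.prod_mul_distrib
           _ = t ^ (n+1) * ∏ j, (t⁻¹ - g j) := by
              rw [Finset.prod_const, Finset.card_univ, Fintype.card_fin]
      rw [hg, hg, hg, part1 t⁻¹]
      ring
  have hpoly : (∏ j, (1 - C ((lam j : ℂ)) * X)) =
      C (1/2 : ℂ) * ∏ j, (1 - C (z j) * X) +
        C (1/2 : ℂ) * ∏ j, (1 - C ((starRingEnd ℂ) (z j)) * X) := by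
    apply Polynomial.funext
    intro t
    have h := hptw t
    simpa [Polynomial.eval_prod] using h
  obtain ⟨_, hl1, hl2⟩ := prod_coeffs (fun j => ((lam j : ℂ))) Finset.univ
  obtain ⟨_, hz1, hz2⟩ := prod_coeffs z Finset.univ
  obtain ⟨_, hc1, hc2⟩ := prod_coeffs (fun j => (starRingEnd ℂ) (z j)) Finset.univ
  have E1 : (∑ j, ((lam j : ℂ))) = (1/2) * (∑ j, z j) + (1/2) * (∑ j, (starRingEnd ℂ) (z j)) := by
    have h := congrArg (fun q : ℂ[X] => q.coeff 1) hpoly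
    simp only [Polynomial.coeff_add, Polynomial.coeff_C_mul, hl1, hz1, hc1] at h
    linear_combination -h
  have E2 : (∑ j, ∑ k ∈ Finset.univ.erase j, ((lam j : ℂ)) * ((lam k : ℂ))) =
      (1/2) * (∑ j, ∑ k ∈ Finset.univ.erase j, z j * z k) +
      (1/2) * (∑ j, ∑ k ∈ Finset.univ.erase j, (starRingEnd ℂ) (z j) * (starRingEnd ℂ) (z k)) := by
    have h := congrArg (fun q : ℂ[X] => q.coeff 2 * 2) hpoly
    simp only [Polynomial.coeff_add, Polynomial.coeff_C_mul] at h
    linear_combination -hl2 + h + (1/2 : ℂ) * hz2 + (1/2 : ℂ) * hc2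
  have hc1' := Complex.add_conj (∑ j, z j)
  rw [map_sum] at hc1'
  push_cast at hc1'
  have hre1 : ∑ j, lam j = (∑ j, z j).re := by
    have h : ((∑ j, lam j : ℝ) : ℂ) = (((∑ j, z j).re : ℝ) : ℂ) := by
      push_cast
      linear_combination E1 + (1/2 : ℂ) * hc1'
    exact_mod_cast h
  have hc2' := Complex.add_conj (∑ j, ∑ k ∈ Finset.univ.erase j, z j * z k)
  have hconjT : (starRingEnd ℂ) (∑ j, ∑ k ∈ Finset.univ.erase j, z j * z k)
      = ∑ j, ∑ k ∈ Finset.univ.erase j, (starRingEnd ℂ) (z j) * (starRingEnd ℂ) (z k) := by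
    rw [map_sum]
    refine Finset.sum_congr rfl fun j _ => ?_
    rw [map_sum]
    exact Finset.sum_congr rfl fun k _ => _root_.map_mul _ _ _
  rw [hconjT] at hc2'
  push_cast at hc2'
  have hre2 : ∑ j, ∑ k ∈ Finset.univ.erase j, lam j * lam k =
      (∑ j, ∑ k ∈ Finset.univ.erase j, z j * z k).re := by
    have h : ((∑ j, ∑ k ∈ Finset.univ.erase j, lam j * lam k : ℝ) : ℂ) =
        (((∑ j, ∑ k ∈ Finset.univ.erase j, z j * z k).re : ℝ) : ℂ) := by
      push_cast
      linear_combination E2 + (1/2 : ℂ) * hc2'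
    exact_mod_cast h
  have hrs1 : (∑ j, z j).re = ∑ j, (z j).re := Complex.re_sum _ _
  have hrs2 : (∑ j, ∑ k ∈ Finset.univ.erase j, z j * z k).re
      = ∑ j, ∑ k ∈ Finset.univ.erase j, (z j * z k).re := by
    rw [Complex.re_sum]
    exact Finset.sum_congr rfl fun j _ => Complex.re_sum _ _
  have hsq : (∑ j, lam j)^2 = ∑ j, (lam j)^2 + ∑ j, ∑ k ∈ Finset.univ.erase j, lam j * lam k := by
    rw [sq, Finset.sum_mul_sum, ← Finset.sum_add_distrib]
    refine Finset.sum_congr rfl fun j _ => ?_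
    rw [← Finset.add_sum_erase _ _ (Finset.mem_univ j), sq]
  rw [hrs1] at hre1
  rw [hrs2] at hre2
  rw [← hre1, ← hre2]
  linarith [hsq]
end

section
/- Fix l > 0 and let J be a Jacobi matrix of order N with det J ≠ 0. Then every eigenvalue of J_{l,×} is nonreal, the eigenvalues z_1,…,z_N (with algebraic multiplicity) satisfy Σ_{j=1}^N Arg_{[0,π)} z_j = arctan l, and the number of eigenvalues of J_{l,×} lying in ℂ_+ (respectively in ℂ_−), counted with multiplicity, equals the number of positive (respectively negative) eigenvalues of J. -/
open Matrix Polynomial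

/-- `Arg_{[0,π)} z`. -/
noncomputable def argPi (z : ℂ) : ℝ :=
  if 0 < z.im then z.arg else if z.im < 0 then Real.pi + z.arg else 0

namespace Stmt3Aux

open Complex Filter Topology

variable {N : ℕ}

/-- complexification of a real matrix -/
noncomputable abbrev cx (J : Matrix (Fin (N+1)) (Fin (N+1)) ℝ) :
    Matrix (Fin (N+1)) (Fin (N+1)) ℂ := J.map (fun x => (x : ℂ))

noncomputable def q (J : Matrix (Fin (N+1)) (Fin (N+1)) ℝ) (l : ℝ) : Polynomial ℂ :=
  (mulPert l J).charpoly

lemma offdiag {J : Matrix (Fin (N+1)) (Fin (N+1)) ℝ} (hJ : IsJacobi J) {i j : Fin (N+1)}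
    (h : (i : ℕ) + 1 < (j : ℕ) ∨ (j : ℕ) + 1 < (i : ℕ)) : J i j = 0 := by
  obtain ⟨hsym, hzero, _⟩ := hJ
  rcases h with h | h
  · exact hzero i j h
  · rw [hsym i j]; exact hzero j i h

lemma kernel {J : Matrix (Fin (N+1)) (Fin (N+1)) ℝ} (hJ : IsJacobi J) {z : ℂ}
    {v : Fin (N+1) → ℂ} (hv : cx J *ᵥ v = z • v) (h0 : v 0 = 0) : v = 0 := by
  obtain ⟨hsym, hzero, hpos⟩ := hJ
  have key : ∀ k : ℕ, ∀ hk : k < N+1, v ⟨k, hk⟩ = 0 := by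
    intro k
    induction k using Nat.strong_induction_on with
    | _ k IH =>
      match k with
      | 0 => intro hk; exact h0
      | (m+1) =>
        intro hk
        have hm : m < N+1 := Nat.lt_of_succ_lt hk
        have hrow := congrFun hv ⟨m, hm⟩
        have hvm : v ⟨m, hm⟩ = 0 := IH m (Nat.lt_succ_self m) hm
        have hsum : (cx J *ᵥ v) ⟨m, hm⟩
            = cx J ⟨m, hm⟩ ⟨m+1, hk⟩ * v ⟨m+1, hk⟩ := by
          show ∑ j, (cx J) ⟨m, hm⟩ j * v j = _
          refine Finset.sum_eq_single_of_mem (⟨m+1, hk⟩ : Fin (N+1)) (Finset.mem_univ _) ?_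
          intro j _ hj
          rcases lt_trichotomy (j : ℕ) (m+1) with hlt | heq | hgt
          · have hvj : v j = 0 := by
              have := IH (j : ℕ) (by omega) j.isLt
              simpa [Fin.eta] using this
            rw [hvj, mul_zero]
          · exact absurd (Fin.ext heq) hj
          · have hJ0 : J ⟨m, hm⟩ j = 0 := hzero _ _ (by simpa using hgt)
            simp [Matrix.map_apply, hJ0]
        have hzv : (z • v) ⟨m, hm⟩ = 0 := by simp [hvm]
        have hmul : cx J ⟨m, hm⟩ ⟨m+1, hk⟩ * v ⟨m+1, hk⟩ = 0 := by
          rw [← hsum, hrow, hzv]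
        have hne : cx J ⟨m, hm⟩ ⟨m+1, hk⟩ ≠ 0 := by
          have := hpos ⟨m, hm⟩ ⟨m+1, hk⟩ rfl
          simp only [Matrix.map_apply]
          exact_mod_cast this.ne'
        exact (mul_eq_zero.mp hmul).resolve_left hne
  funext j
  have := key (j : ℕ) j.isLt
  simpa [Fin.eta] using this

lemma pert_factor (l : ℝ) :
    (1 + (Complex.I * (l:ℝ)) • Matrix.single (0 : Fin (N+1)) 0 (1:ℂ))
      = Matrix.diagonal (fun i => if i = 0 then 1 + Complex.I * l else 1) := by
  ext i j
  by_cases hij : i = j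
  · subst hij
    by_cases hi : i = 0
    · subst hi
      simp [Matrix.single, Matrix.one_apply]
    · simp [Matrix.single, Matrix.one_apply, hi, Ne.symm hi]
  · have h1 : ¬((0:Fin (N+1)) = i ∧ (0:Fin (N+1)) = j) := by
      rintro ⟨rfl, rfl⟩; exact hij rfl
    simp [Matrix.single, Matrix.one_apply, hij, Matrix.diagonal_apply_ne _ hij, h1]

lemma mulPert_diag (l : ℝ) (J : Matrix (Fin (N+1)) (Fin (N+1)) ℝ) (u : Fin (N+1) → ℂ)
    (i : Fin (N+1)) :
    (mulPert l J *ᵥ u) i = (if i = 0 then 1 + Complex.I * l else 1) * ((cx J *ᵥ u) i) := by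
  rw [mulPert, pert_factor, ← Matrix.mulVec_mulVec]
  have : (Matrix.diagonal (fun i : Fin (N+1) => if i = 0 then 1 + Complex.I * l else 1)
      *ᵥ (cx J *ᵥ u)) i = _ := Matrix.mulVec_diagonal _ _ _
  rw [this]

lemma mulPert_mulVec (l : ℝ) (J : Matrix (Fin (N+1)) (Fin (N+1)) ℝ) (u : Fin (N+1) → ℂ) :
    mulPert l J *ᵥ u = cx J *ᵥ u
      + Pi.single 0 (Complex.I * l * ((cx J *ᵥ u) 0)) := by
  funext i
  rw [mulPert_diag]
  rcases eq_or_ne i 0 with rfl | hi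
  · simp [Pi.single_apply]
    ring
  · simp [Pi.single_apply, hi]

lemma det_mulPert (l : ℝ) (J : Matrix (Fin (N+1)) (Fin (N+1)) ℝ) :
    (mulPert l J).det = (1 + Complex.I * l) * (J.det : ℂ) := by
  have hcx : (cx J).det = (J.det : ℂ) := by
    have := (RingHom.map_det Complex.ofRealHom J).symm
    simp [RingHom.mapMatrix_apply] at this; exact this
  rw [mulPert, pert_factor, Matrix.det_mul, Matrix.det_diagonal, Finset.prod_ite_eq', hcx]
  simp

noncomputable def Dp (J : Matrix (Fin (N+1)) (Fin (N+1)) ℝ) : Polynomial ℂ :=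
  (updateRow (charmatrix (cx J)) 0 (fun j => C ((J 0 j : ℂ)))).det

lemma q_eq (J : Matrix (Fin (N+1)) (Fin (N+1)) ℝ) (l : ℝ) :
    q J l = (J.charpoly).map Complex.ofRealHom - C (Complex.I * l) * Dp J := by
  classical
  have hEA : ∀ (A : Matrix (Fin (N+1)) (Fin (N+1)) ℂ) (i j : Fin (N+1)),
      (Matrix.single (0 : Fin (N+1)) (0 : Fin (N+1)) (1:ℂ) * A) i j
        = if i = 0 then A 0 j else 0 := by
    intro A i j
    by_cases hi : i = 0
    · subst hi; simp [Matrix.mul_apply, Matrix.single]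
    · simp [Matrix.mul_apply, Matrix.single, hi, Ne.symm hi]
  have hM : mulPert l J = cx J + (Complex.I * l) • (Matrix.single 0 0 (1:ℂ) * cx J) := by
    rw [mulPert, add_mul, one_mul, smul_mul_assoc]
  have hch : charmatrix (mulPert l J) = Matrix.updateRow (charmatrix (cx J)) 0
      (charmatrix (cx J) 0 + (-(C (Complex.I * l))) • (fun j' => C ((J 0 j' : ℂ)))) := by
    refine Matrix.ext fun i j => ?_
    rcases eq_or_ne i 0 with rfl | hi
    · rw [Matrix.updateRow_self]
      simp only [charmatrix_apply, hM, Matrix.add_apply, Matrix.smul_apply, hEA, if_pos rfl,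
        Pi.add_apply, Pi.smul_apply, Matrix.map_apply, smul_eq_mul]
      simp only [Polynomial.C_add, Polynomial.C_mul, if_true]
      ring
    · rw [Matrix.updateRow_ne hi]
      simp only [charmatrix_apply, hM, Matrix.add_apply, Matrix.smul_apply, hEA, if_neg hi,
        smul_eq_mul, mul_zero, add_zero]
  rw [q, Matrix.charpoly, hch, Matrix.det_updateRow_add, Matrix.det_updateRow_smul,
    Matrix.updateRow_eq_self]
  rw [← Matrix.charpoly]
  have hmap : (cx J).charpoly = (J.charpoly).map Complex.ofRealHom := by
    have := Matrix.charpoly_map J Complex.ofRealHom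
    exact this
  rw [hmap, Dp]
  ring

lemma eval_charpoly' {n : ℕ} (M : Matrix (Fin n) (Fin n) ℂ) (t : ℂ) :
    M.charpoly.eval t = (t • (1 : Matrix (Fin n) (Fin n) ℂ) - M).det := by
  have h1 : M.charpoly.eval t = ((charmatrix M).map (Polynomial.evalRingHom t)).det := by
    rw [Matrix.charpoly]
    have := RingHom.map_det (Polynomial.evalRingHom t) (charmatrix M)
    simpa [RingHom.mapMatrix_apply] using this
  rw [h1]
  congr 1
  ext i j
  rcases eq_or_ne i j with rfl | hij
  · simp [charmatrix_apply_eq, Matrix.one_apply]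
  · simp [charmatrix_apply_ne _ _ _ hij, Matrix.one_apply, hij]

lemma exists_eigenvector {n : ℕ} {M : Matrix (Fin n) (Fin n) ℂ} {t : ℂ}
    (h : (t • (1 : Matrix (Fin n) (Fin n) ℂ) - M).det = 0) :
    ∃ u, u ≠ 0 ∧ M *ᵥ u = t • u := by
  obtain ⟨u, hu0, hu⟩ := (Matrix.exists_mulVec_eq_zero_iff).mpr h
  refine ⟨u, hu0, ?_⟩
  rw [Matrix.sub_mulVec, Matrix.smul_mulVec, Matrix.one_mulVec, sub_eq_zero] at hu
  exact hu.symm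

lemma quadrant {J : Matrix (Fin (N+1)) (Fin (N+1)) ℝ} (hJ : IsJacobi J) (hdet : J.det ≠ 0)
    {l : ℝ} (hl : 0 < l) {t : ℂ} (ht : (q J l).IsRoot t) : 0 < t.re * t.im := by
  classical
  have hdet0 : (t • (1 : Matrix (Fin (N+1)) (Fin (N+1)) ℂ) - mulPert l J).det = 0 := by
    rw [← eval_charpoly']; exact ht
  obtain ⟨u, hu0, hu⟩ := exists_eigenvector hdet0
  have hMu : cx J *ᵥ u + Pi.single 0 (Complex.I * l * ((cx J *ᵥ u) 0)) = t • u := by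
    rw [← mulPert_mulVec]; exact hu
  set w : Fin (N+1) → ℂ := cx J *ᵥ u with hw
  have hdetC : (cx J).det ≠ 0 := by
    have h1 : (cx J).det = ((J.det : ℝ) : ℂ) := by
      have := RingHom.map_det Complex.ofRealHom J
      simp [RingHom.mapMatrix_apply] at this; exact this.symm
    rw [h1]
    exact_mod_cast hdet
  by_cases hw0 : w 0 = 0
  · exfalso
    have hJu : cx J *ᵥ u = t • u := by
      have := hMu
      rw [hw0] at this
      simpa using this
    have ht0 : t ≠ 0 := by
      rintro rfl
      have h0 : cx J *ᵥ u = 0 := by simpa using hJu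
      exact hdetC ((Matrix.exists_mulVec_eq_zero_iff).mp ⟨u, hu0, h0⟩)
    have hu00 : u 0 = 0 := by
      have h1 : w 0 = t * u 0 := by
        have := congrFun hJu 0
        simpa [hw] using this
      rw [hw0] at h1
      exact (mul_eq_zero.mp h1.symm).resolve_left ht0
    exact hu0 (kernel hJ hJu hu00)
  · set β : ℂ := star w ⬝ᵥ u with hβ
    set mw : ℝ := Complex.normSq (w 0) with hmw
    have key : star w ⬝ᵥ w - t * β = -(Complex.I * l) * (mw : ℂ) := by
      have h2 : w - t • u = - Pi.single 0 (Complex.I * l * w 0) := by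
        rw [← hMu]; abel
      calc star w ⬝ᵥ w - t * β
          = star w ⬝ᵥ (w - t • u) := by
            rw [dotProduct_sub, dotProduct_smul, smul_eq_mul]
        _ = - (star w ⬝ᵥ Pi.single 0 (Complex.I * l * w 0)) := by
            rw [h2, dotProduct_neg]
        _ = -(Complex.I * l) * (mw : ℂ) := by
            rw [dotProduct_single]
            have hst : (star w) 0 = (starRingEnd ℂ) (w 0) := rfl
            rw [hst, hmw]
            have : (starRingEnd ℂ) (w 0) * (Complex.I * ↑l * w 0)
                = Complex.I * ↑l * (w 0 * (starRingEnd ℂ) (w 0)) := by ring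
            rw [this, Complex.mul_conj]
            ring
    have hβreal : β.im = 0 := by
      have h1 : star u ⬝ᵥ w = star (star w ⬝ᵥ u) := Matrix.star_dotProduct u w
      have hherm : (cx J)ᴴ = cx J := by
        ext i j
        simp [Matrix.conjTranspose_apply, Matrix.map_apply, hJ.1 j i]
      have h2 : star w ⬝ᵥ u = star u ⬝ᵥ w := by
        rw [hw, Matrix.star_mulVec, ← Matrix.dotProduct_mulVec, hherm]
      have h3 : β = star β := h2.trans h1
      have := congrArg Complex.im h3
      simp only [Complex.star_def, Complex.conj_im] at this
      linarith
    have hγ : (star w ⬝ᵥ w) = ((∑ i, Complex.normSq (w i) : ℝ) : ℂ) := by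
      rw [dotProduct]
      push_cast
      refine Finset.sum_congr rfl fun i _ => ?_
      rw [Pi.star_apply]
      rw [show (star (w i)) * w i = w i * (starRingEnd ℂ) (w i) from mul_comm _ _]
      rw [Complex.mul_conj]
    set γr : ℝ := ∑ i, Complex.normSq (w i) with hγr
    have hγpos : 0 < γr := by
      have h1 : 0 < Complex.normSq (w 0) := Complex.normSq_pos.mpr hw0
      exact lt_of_lt_of_le h1
        (Finset.single_le_sum (fun i _ => Complex.normSq_nonneg (w i)) (Finset.mem_univ 0))
    have hmwpos : 0 < mw := Complex.normSq_pos.mpr hw0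
    rw [hγ, Complex.ext_iff] at key
    obtain ⟨hre, him⟩ := key
    simp only [Complex.sub_re, Complex.sub_im, Complex.mul_re, Complex.mul_im,
      Complex.ofReal_re, Complex.ofReal_im, Complex.neg_re, Complex.neg_im,
      Complex.I_re, Complex.I_im, hβreal, ← hγr] at hre him
    -- hre : γr - t.re * β.re = 0 (modulo arithmetic), him : - (t.im * β.re) = - (l * mw)
    have hre' : t.re * β.re = γr := by nlinarith [hre]
    have him' : t.im * β.re = l * mw := by nlinarith [him]
    nlinarith [mul_pos (hre' ▸ hγpos : (0:ℝ) < t.re * β.re)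
      (him'.symm ▸ mul_pos hl hmwpos : (0:ℝ) < t.im * β.re), sq_nonneg β.re]

lemma roots_prod_fun (f : Fin (N+1) → ℂ) :
    (∏ j, (X - C (f j))).roots = Finset.univ.val.map f := by
  have h1 : (∏ j, (X - C (f j)))
      = ((Finset.univ.val.map f).map (fun a => X - C a)).prod := by
    rw [Finset.prod_eq_multiset_prod, Multiset.map_map]
    rfl
  rw [h1, Polynomial.roots_multiset_prod_X_sub_C]

lemma monic_root_bound {p : Polynomial ℂ} (hm : p.Monic) (hd : 1 ≤ p.natDegree) {t : ℂ}
    (ht : p.IsRoot t) :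
    ‖t‖ ≤ 1 + ∑ i ∈ Finset.range p.natDegree, ‖p.coeff i‖ := by
  set n := p.natDegree with hn
  have hsum_nonneg : 0 ≤ ∑ i ∈ Finset.range n, ‖p.coeff i‖ :=
    Finset.sum_nonneg fun i _ => norm_nonneg _
  by_cases habs : ‖t‖ ≤ 1
  · linarith
  push_neg at habs
  have heval : p.eval t = 0 := ht
  rw [Polynomial.eval_eq_sum_range, Finset.sum_range_succ, ← hn, hm.coeff_natDegree,
    one_mul] at heval
  have htn : t ^ n = -∑ i ∈ Finset.range n, p.coeff i * t ^ i := by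
    linear_combination heval
  have h1 : ‖t‖ ^ n
      ≤ (∑ i ∈ Finset.range n, ‖p.coeff i‖) * ‖t‖ ^ (n-1) := by
    calc ‖t‖ ^ n = ‖t ^ n‖ := (norm_pow _ _).symm
      _ = ‖∑ i ∈ Finset.range n, p.coeff i * t ^ i‖ := by
          rw [htn, norm_neg]
      _ ≤ ∑ i ∈ Finset.range n, ‖p.coeff i * t ^ i‖ :=
          norm_sum_le _ _
      _ ≤ ∑ i ∈ Finset.range n, ‖p.coeff i‖ * ‖t‖ ^ (n-1) := by
          refine Finset.sum_le_sum fun i hi => ?_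
          rw [norm_mul, norm_pow]
          refine mul_le_mul_of_nonneg_left ?_ (norm_nonneg _)
          exact pow_le_pow_right₀ habs.le (by
            have := Finset.mem_range.mp hi; omega)
      _ = (∑ i ∈ Finset.range n, ‖p.coeff i‖) * ‖t‖ ^ (n-1) :=
          (Finset.sum_mul _ _ _).symm
  have h2 : ‖t‖ ^ n = ‖t‖ ^ (n-1) * ‖t‖ := by
    rw [← pow_succ]
    congr 1
    omega
  have hpowpos : (0:ℝ) < ‖t‖ ^ (n-1) := by positivity
  nlinarith [h1, h2, hpowpos]

lemma exists_label (J : Matrix (Fin (N+1)) (Fin (N+1)) ℝ) (l : ℝ) :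
    ∃ w : Fin (N+1) → ℂ, q J l = ∏ i, (X - C (w i)) := by
  have hmonic : (q J l).Monic := Matrix.charpoly_monic _
  have hdeg : (q J l).natDegree = N+1 := by
    rw [q, Matrix.charpoly_natDegree_eq_dim, Fintype.card_fin]
  have hsplits : Splits (q J l) := IsAlgClosed.splits _
  have hcard : (q J l).roots.card = N+1 := by
    rw [← hdeg]
    exact (Polynomial.splits_iff_card_roots.mp hsplits)
  set L := (q J l).roots.toList with hL
  have hlen : L.length = N+1 := by rw [hL, Multiset.length_toList, hcard]
  refine ⟨fun i => L.get (Fin.cast hlen.symm i), ?_⟩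
  have hroots : (q J l).roots
      = Finset.univ.val.map (fun i : Fin (N+1) => L.get (Fin.cast hlen.symm i)) := by
    rw [Fin.univ_val_map]
    have hofn : List.ofFn (fun i : Fin (N+1) => L.get (Fin.cast hlen.symm i)) = L := by
      apply List.ext_getElem
      · simp [hlen]
      · intro k h1 h2
        rw [List.getElem_ofFn]
        simp [List.get_eq_getElem]
    rw [hofn, hL, Multiset.coe_toList]
  have hprod := hsplits.eq_prod_roots_of_monic hmonic
  rw [hprod, hroots, Finset.prod_eq_multiset_prod, Multiset.map_map]
  rfl

lemma key_subseq (J : Matrix (Fin (N+1)) (Fin (N+1)) ℝ) {lst : ℝ} {ls : ℕ → ℝ}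
    (hto : Tendsto ls atTop (𝓝 lst)) :
    ∃ φ : ℕ → ℕ, StrictMono φ ∧ ∃ (w : Fin (N+1) → ℂ) (W : ℕ → Fin (N+1) → ℂ),
      q J lst = ∏ i, (X - C (w i)) ∧ (∀ k, q J (ls (φ k)) = ∏ i, (X - C (W k i))) ∧
      ∀ i, Tendsto (fun k => W k i) atTop (𝓝 (w i)) := by
  classical
  choose W' hW' using fun k => exists_label J (ls k)
  obtain ⟨L, hL⟩ : ∃ L : ℝ, ∀ k, |ls k| ≤ L := by
    obtain ⟨L, hL⟩ := (hto.abs).bddAbove_range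
    exact ⟨L, fun k => hL ⟨k, rfl⟩⟩
  set P := (J.charpoly).map Complex.ofRealHom with hP
  set D := Dp J with hD
  set B : ℝ := 1 + ∑ i ∈ Finset.range (N+1),
      (‖P.coeff i‖ + L * ‖D.coeff i‖) with hB
  have hL0 : 0 ≤ L := le_trans (abs_nonneg _) (hL 0)
  have hWbound : ∀ k i, ‖W' k i‖ ≤ B := by
    intro k i
    have hroot : (q J (ls k)).IsRoot (W' k i) := by
      rw [Polynomial.IsRoot, hW' k, Polynomial.eval_prod]
      exact Finset.prod_eq_zero (Finset.mem_univ i) (by simp)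
    have hmono : (q J (ls k)).Monic := Matrix.charpoly_monic _
    have hdeg : (q J (ls k)).natDegree = N+1 := by
      rw [q, Matrix.charpoly_natDegree_eq_dim, Fintype.card_fin]
    have hbd := monic_root_bound hmono (by omega) hroot
    rw [hdeg] at hbd
    refine hbd.trans ?_
    rw [hB]
    have hco : ∀ i' ∈ Finset.range (N+1), ‖(q J (ls k)).coeff i'‖
        ≤ ‖P.coeff i'‖ + L * ‖D.coeff i'‖ := by
      intro i' _
      rw [q_eq, Polynomial.coeff_sub, Polynomial.coeff_C_mul]
      calc ‖P.coeff i' - Complex.I * (ls k) * D.coeff i'‖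
          ≤ ‖P.coeff i'‖ + ‖Complex.I * (ls k) * D.coeff i'‖ := by
            rw [sub_eq_add_neg]
            exact (norm_add_le _ _).trans (by rw [norm_neg])
        _ ≤ ‖P.coeff i'‖ + L * ‖D.coeff i'‖ := by
            rw [norm_mul, norm_mul, Complex.norm_I, one_mul,
              Complex.norm_real, Real.norm_eq_abs]
            exact add_le_add_right
              (mul_le_mul_of_nonneg_right (hL k) (norm_nonneg _)) _
    exact add_le_add_right (Finset.sum_le_sum hco) 1
  have hB0 : 0 ≤ B := le_trans (norm_nonneg _) (hWbound 0 0)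
  have hcomp : IsCompact (Metric.closedBall (0 : Fin (N+1) → ℂ) B) :=
    isCompact_closedBall _ _
  have hmem : ∀ k, W' k ∈ Metric.closedBall (0 : Fin (N+1) → ℂ) B := by
    intro k
    rw [Metric.mem_closedBall, dist_zero_right, pi_norm_le_iff_of_nonneg hB0]
    intro i
    simpa using hWbound k i
  obtain ⟨w, _, φ, hφ, hconv⟩ := hcomp.tendsto_subseq hmem
  have hcoord : ∀ i, Tendsto (fun k => W' (φ k) i) atTop (𝓝 (w i)) := by
    intro i
    exact (tendsto_pi_nhds.mp hconv) i
  refine ⟨φ, hφ, w, fun k => W' (φ k), ?_, fun k => hW' (φ k), hcoord⟩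
  apply Polynomial.funext
  intro r
  have h1 : Tendsto (fun k => Polynomial.eval r (q J (ls (φ k)))) atTop
      (𝓝 (Polynomial.eval r (q J lst))) := by
    have hform : ∀ l' : ℝ, Polynomial.eval r (q J l')
        = P.eval r - (l' : ℂ) * (Complex.I * D.eval r) := by
      intro l'
      rw [q_eq, Polynomial.eval_sub, Polynomial.eval_mul, Polynomial.eval_C]
      ring
    simp only [hform]
    refine Tendsto.sub tendsto_const_nhds (Tendsto.mul_const _ ?_)
    exact (Complex.continuous_ofReal.tendsto lst).comp (hto.comp hφ.tendsto_atTop)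
  have h2 : Tendsto (fun k => Polynomial.eval r (q J (ls (φ k)))) atTop
      (𝓝 (Polynomial.eval r (∏ i, (X - C (w i))))) := by
    have heq : ∀ k, Polynomial.eval r (q J (ls (φ k))) = ∏ i, (r - W' (φ k) i) := by
      intro k
      rw [hW' (φ k), Polynomial.eval_prod]
      simp
    have hprod : Tendsto (fun k => ∏ i, (r - W' (φ k) i)) atTop (𝓝 (∏ i, (r - w i))) :=
      tendsto_finset_prod _ fun i _ => Tendsto.const_sub _ (hcoord i)
    rw [show Polynomial.eval r (∏ i, (X - C (w i))) = ∏ i, (r - w i) by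
      rw [Polynomial.eval_prod]; simp]
    exact hprod.congr fun k => (heq k).symm
  exact tendsto_nhds_unique h1 h2

noncomputable def cnt (J : Matrix (Fin (N+1)) (Fin (N+1)) ℝ) (l : ℝ) : ℕ :=
  (((q J l).roots).filter (fun t => 0 < t.im)).card

noncomputable def sArg (J : Matrix (Fin (N+1)) (Fin (N+1)) ℝ) (l : ℝ) : ℝ :=
  (((q J l).roots).map argPi).sum

lemma cnt_label {J : Matrix (Fin (N+1)) (Fin (N+1)) ℝ} {l : ℝ} {w : Fin (N+1) → ℂ}
    (h : q J l = ∏ i, (X - C (w i))) :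
    cnt J l = (Finset.univ.filter fun i => 0 < (w i).im).card := by
  classical
  unfold cnt
  rw [h, roots_prod_fun]
  rw [← Multiset.countP_eq_card_filter, Multiset.countP_map]
  rfl

lemma sArg_label {J : Matrix (Fin (N+1)) (Fin (N+1)) ℝ} {l : ℝ} {w : Fin (N+1) → ℂ}
    (h : q J l = ∏ i, (X - C (w i))) :
    sArg J l = ∑ i, argPi (w i) := by
  unfold sArg
  rw [h, roots_prod_fun, Multiset.map_map]
  rfl

lemma exists_seq_of_not_eventually {l₀ : ℝ} {P : ℝ → Prop}
    (h : ¬ ∀ᶠ l in nhds l₀, 0 < l → P l) :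
    ∃ ls : ℕ → ℝ, (∀ k, 0 < ls k) ∧ Tendsto ls atTop (𝓝 l₀) ∧ ∀ k, ¬ P (ls k) := by
  have h' : ∀ k : ℕ, ∃ x, |x - l₀| < 1/(k+1) ∧ (0 < x ∧ ¬ P x) := by
    intro k
    by_contra hc
    push_neg at hc
    apply h
    rw [Metric.eventually_nhds_iff]
    refine ⟨1/(k+1), by positivity, fun {y} hy hy0 => ?_⟩
    have := hc y (by simpa [Real.dist_eq] using hy)
    tauto
  choose ls h1 h2 using h'
  refine ⟨ls, fun k => (h2 k).1, ?_, fun k => (h2 k).2⟩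
  rw [Metric.tendsto_atTop]
  intro ε hε
  obtain ⟨K, hK⟩ := exists_nat_one_div_lt hε
  refine ⟨K, fun k hk => ?_⟩
  rw [Real.dist_eq]
  calc |ls k - l₀| < 1/(k+1) := h1 k
    _ ≤ 1/(K+1) := by
        apply one_div_le_one_div_of_le <;> [positivity; exact_mod_cast by omega]
    _ < ε := hK

lemma const_of_loc {α : Type*} [TopologicalSpace α] {f : ℝ → α}
    (hloc : ∀ l₀ : ℝ, 0 < l₀ → ∀ᶠ l in nhds l₀, 0 < l → f l = f l₀) {a b : ℝ}
    (ha : 0 < a) (hb : 0 < b) : f a = f b := by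
  haveI : PreconnectedSpace (Set.Ioi (0:ℝ)) :=
    Subtype.preconnectedSpace isPreconnected_Ioi
  set g : Set.Ioi (0:ℝ) → α := fun x => f x with hg
  have hlc : IsLocallyConstant g := by
    rw [IsLocallyConstant.iff_eventually_eq]
    intro x
    have hx := hloc x x.2
    rw [nhds_subtype_eq_comap, Filter.eventually_comap]
    filter_upwards [hx] with y hy
    intro aa haa
    show f aa = f x
    rw [haa]
    exact hy (haa ▸ aa.2)
  exact hlc.apply_eq_of_preconnectedSpace ⟨a, ha⟩ ⟨b, hb⟩

lemma sArg_mod {J : Matrix (Fin (N+1)) (Fin (N+1)) ℝ} (hJ : IsJacobi J) (hdet : J.det ≠ 0)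
    {l : ℝ} (hl : 0 < l) : ∃ n : ℤ, sArg J l = Real.arctan l + n * Real.pi := by
  classical
  obtain ⟨w, hw⟩ := exists_label J l
  have hroot : ∀ i, (q J l).IsRoot (w i) := by
    intro i
    rw [Polynomial.IsRoot, hw, Polynomial.eval_prod]
    exact Finset.prod_eq_zero (Finset.mem_univ i) (by simp)
  have hquad : ∀ i, 0 < (w i).re * (w i).im := fun i => quadrant hJ hdet hl (hroot i)
  have hwne : ∀ i, w i ≠ 0 := by
    intro i h
    have := hquad i
    rw [h] at this
    simp at this
  have hfac : ∀ i, (‖w i‖ : ℂ) * Complex.exp ((argPi (w i) : ℂ) * Complex.I)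
      = (if 0 < (w i).im then 1 else -1) * w i := by
    intro i
    by_cases him : 0 < (w i).im
    · rw [if_pos him, argPi, if_pos him, Complex.norm_mul_exp_arg_mul_I, one_mul]
    · have him' : (w i).im < 0 := by
        rcases lt_trichotomy ((w i).im) 0 with h | h | h
        · exact h
        · exfalso; have := hquad i; rw [h] at this; simp at this
        · exact absurd h him
      rw [if_neg him, argPi, if_neg him, if_pos him']
      rw [Complex.ofReal_add, add_mul, Complex.exp_add, Complex.exp_pi_mul_I]
      rw [show (‖w i‖ : ℂ) * (-1 * Complex.exp ((Complex.arg (w i) : ℂ) * Complex.I))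
          = -1 * ((‖w i‖ : ℂ) * Complex.exp ((Complex.arg (w i) : ℂ) * Complex.I))
          from by ring]
      rw [Complex.norm_mul_exp_arg_mul_I]
  set A : ℝ := ∑ i, argPi (w i) with hA
  set T : ℝ := ∏ i, ‖w i‖ with hT
  set sg : ℂ := ∏ i, (if 0 < (w i).im then (1:ℂ) else -1) with hsg
  have hprodfac : (T : ℂ) * Complex.exp ((A : ℂ) * Complex.I) = sg * ∏ i, w i := by
    rw [hT, hA, hsg]
    push_cast
    rw [Finset.sum_mul, Complex.exp_sum, ← Finset.prod_mul_distrib, ← Finset.prod_mul_distrib]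
    exact Finset.prod_congr rfl fun i _ => hfac i
  have hdetM : ∏ i, w i = (1 + Complex.I * l) * (J.det : ℂ) := by
    rw [← det_mulPert l J]
    have h1 : (mulPert l J).det = (-1:ℂ)^(N+1) * (q J l).coeff 0 := by
      have := Matrix.det_eq_sign_charpoly_coeff (mulPert l J)
      rwa [Fintype.card_fin] at this
    rw [h1, Polynomial.coeff_zero_eq_eval_zero, hw, Polynomial.eval_prod]
    simp only [Polynomial.eval_sub, Polynomial.eval_X, Polynomial.eval_C, zero_sub]
    rw [show (∏ i, -(w i)) = ∏ i, ((-1:ℂ) * w i) from by simp]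
    rw [Finset.prod_mul_distrib, Finset.prod_const, Finset.card_univ, Fintype.card_fin,
      ← mul_assoc, ← pow_add]
    rw [Even.neg_one_pow ⟨N+1, by ring⟩, one_mul]
  have hs : Real.sqrt (1 + l^2) ≠ 0 := by positivity
  have hpolar : (1 : ℂ) + Complex.I * l
      = (Real.sqrt (1 + l^2) : ℂ) * Complex.exp ((Real.arctan l : ℂ) * Complex.I) := by
    rw [Complex.exp_mul_I]
    rw [show Complex.cos (Real.arctan l : ℂ) = ((Real.cos (Real.arctan l) : ℝ) : ℂ) from
      (Complex.ofReal_cos _).symm]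
    rw [show Complex.sin (Real.arctan l : ℂ) = ((Real.sin (Real.arctan l) : ℝ) : ℂ) from
      (Complex.ofReal_sin _).symm]
    rw [Real.cos_arctan, Real.sin_arctan]
    apply Complex.ext
    · push_cast
      field_simp
      rw [mul_div_cancel_right₀ _ (Complex.ofReal_ne_zero.mpr hs)]
    · push_cast
      field_simp
      rw [mul_div_cancel_right₀ _ (Complex.ofReal_ne_zero.mpr hs)]
  have hTpos : 0 < T := Finset.prod_pos fun i _ => norm_pos_iff.mpr (hwne i)
  have hkey : (T : ℂ) * Complex.exp ((A : ℂ) * Complex.I)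
      = sg * ((Real.sqrt (1 + l^2) * J.det : ℝ) : ℂ)
        * Complex.exp ((Real.arctan l : ℂ) * Complex.I) := by
    rw [hprodfac, hdetM, hpolar]
    push_cast
    ring
  have hsg2 : sg * sg = 1 := by
    rw [hsg, ← Finset.prod_mul_distrib]
    apply Finset.prod_eq_one
    intro i _
    by_cases him : 0 < (w i).im <;> simp [him]
  have hsqr : ((T^2 : ℝ) : ℂ) * Complex.exp (((2*A : ℝ) : ℂ) * Complex.I)
      = ((((Real.sqrt (1 + l^2) * J.det)^2 : ℝ)) : ℂ)
        * Complex.exp (((2*Real.arctan l : ℝ) : ℂ) * Complex.I) := by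
    have h2 := congrArg (fun x => x * x) hkey
    calc ((T^2 : ℝ) : ℂ) * Complex.exp (((2*A : ℝ) : ℂ) * Complex.I)
        = ((T:ℂ) * Complex.exp ((A : ℂ) * Complex.I))
          * ((T:ℂ) * Complex.exp ((A : ℂ) * Complex.I)) := by
          rw [show ((2*A : ℝ) : ℂ) * Complex.I = ((A:ℝ):ℂ) * Complex.I + ((A:ℝ):ℂ) * Complex.I
            from by push_cast; ring, Complex.exp_add,
            show ((T^2 : ℝ) : ℂ) = ((T:ℝ):ℂ) * ((T:ℝ):ℂ) from by push_cast; ring]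
          ring
      _ = (sg * ((Real.sqrt (1 + l^2) * J.det : ℝ) : ℂ)
            * Complex.exp ((Real.arctan l : ℂ) * Complex.I))
          * (sg * ((Real.sqrt (1 + l^2) * J.det : ℝ) : ℂ)
            * Complex.exp ((Real.arctan l : ℂ) * Complex.I)) := by rw [h2]
      _ = (sg * sg) * (((Real.sqrt (1 + l^2) * J.det : ℝ) : ℂ)
            * ((Real.sqrt (1 + l^2) * J.det : ℝ) : ℂ))
          * (Complex.exp ((Real.arctan l : ℂ) * Complex.I)
            * Complex.exp ((Real.arctan l : ℂ) * Complex.I)) := by ring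
      _ = _ := by
          rw [hsg2, one_mul, ← Complex.exp_add]
          rw [show ((Real.arctan l : ℝ) : ℂ) * Complex.I + ((Real.arctan l : ℝ) : ℂ) * Complex.I
            = ((2*Real.arctan l : ℝ) : ℂ) * Complex.I from by push_cast; ring]
          rw [show (((Real.sqrt (1+l^2) * J.det : ℝ)) : ℂ) * (((Real.sqrt (1+l^2) * J.det : ℝ)) : ℂ)
            = ((((Real.sqrt (1+l^2) * J.det)^2 : ℝ)) : ℂ) from by push_cast; ring]
  have hT2 : ((T^2 : ℝ) : ℂ) ≠ 0 :=
    Complex.ofReal_ne_zero.mpr (by positivity)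
  have hdiv : Complex.exp (((2*A - 2*Real.arctan l : ℝ) : ℂ) * Complex.I)
      = ((((Real.sqrt (1 + l^2) * J.det)^2 / T^2 : ℝ)) : ℂ) := by
    have hE1 : Complex.exp (((2*A : ℝ) : ℂ) * Complex.I)
        = (((Real.sqrt (1 + l^2) * J.det)^2 : ℝ) : ℂ) / ((T^2 : ℝ) : ℂ)
          * Complex.exp (((2*Real.arctan l : ℝ) : ℂ) * Complex.I) := by
      rw [div_mul_eq_mul_div, eq_div_iff hT2]
      linear_combination hsqr
    rw [show ((2*A - 2*Real.arctan l : ℝ) : ℂ) * Complex.I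
        = ((2*A : ℝ) : ℂ) * Complex.I - ((2*Real.arctan l : ℝ) : ℂ) * Complex.I from by
      push_cast; ring]
    rw [Complex.exp_sub, hE1]
    rw [mul_div_cancel_right₀ _ (Complex.exp_ne_zero _)]
    push_cast
    ring
  have hvalpos : 0 < ((Real.sqrt (1 + l^2) * J.det)^2 / T^2 : ℝ) := by
    have h1 : Real.sqrt (1 + l^2) * J.det ≠ 0 := mul_ne_zero hs hdet
    positivity
  have habs1 : ((Real.sqrt (1 + l^2) * J.det)^2 / T^2 : ℝ) = 1 := by
    have h1 := congrArg (‖·‖) hdiv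
    rw [Complex.norm_exp_ofReal_mul_I, Complex.norm_real, Real.norm_eq_abs] at h1
    rw [abs_of_pos hvalpos] at h1
    linarith
  have hdiv1 : Complex.exp (((2*A - 2*Real.arctan l : ℝ) : ℂ) * Complex.I) = 1 := by
    rw [hdiv, habs1, Complex.ofReal_one]
  obtain ⟨n, hn⟩ := Complex.exp_eq_one_iff.mp hdiv1
  refine ⟨n, ?_⟩
  have hreal : (2*A - 2*Real.arctan l : ℝ) = (n : ℝ) * (2 * Real.pi) := by
    have him := congrArg Complex.im hn
    simpa [← Complex.ofReal_arctan] using him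
  have : A = Real.arctan l + n * Real.pi := by linarith
  rw [sArg_label hw]
  exact this

lemma continuousAt_argPi {x : ℂ} (hx : x.im ≠ 0) : ContinuousAt argPi x := by
  have himt : Tendsto (fun y : ℂ => y.im) (𝓝 x) (𝓝 x.im) :=
    Complex.continuous_im.continuousAt
  rcases hx.lt_or_gt with hneg | hpos
  · have hev : argPi =ᶠ[𝓝 x] (fun y => Real.pi + Complex.arg y) := by
      filter_upwards [himt.eventually (eventually_lt_nhds hneg)] with y hy
      rw [argPi, if_neg (by linarith), if_pos hy]
    exact (continuousAt_const.add (Complex.continuousAt_arg (Or.inr hx))).congr hev.symm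
  · have hev : argPi =ᶠ[𝓝 x] (fun y => Complex.arg y) := by
      filter_upwards [himt.eventually (eventually_gt_nhds hpos)] with y hy
      rw [argPi, if_pos hy]
    exact (Complex.continuousAt_arg (Or.inr hx)).congr hev.symm

lemma detJ_prod {J : Matrix (Fin (N+1)) (Fin (N+1)) ℝ} {lam : Fin (N+1) → ℝ}
    (hlam : J.charpoly = ∏ j, (X - C (lam j))) : J.det = ∏ j, lam j := by
  have h1 := Matrix.det_eq_sign_charpoly_coeff J
  rw [Fintype.card_fin] at h1
  rw [h1, Polynomial.coeff_zero_eq_eval_zero, hlam, Polynomial.eval_prod]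
  simp only [Polynomial.eval_sub, Polynomial.eval_X, Polynomial.eval_C, zero_sub]
  rw [show (∏ j, -lam j) = ∏ j, ((-1:ℝ) * lam j) from by simp]
  rw [Finset.prod_mul_distrib, Finset.prod_const, Finset.card_univ, Fintype.card_fin,
    ← mul_assoc, ← pow_add, Even.neg_one_pow ⟨N+1, by ring⟩, one_mul]

lemma lam_ne {J : Matrix (Fin (N+1)) (Fin (N+1)) ℝ} {lam : Fin (N+1) → ℝ}
    (hlam : J.charpoly = ∏ j, (X - C (lam j))) (hdet : J.det ≠ 0) : ∀ j, lam j ≠ 0 := by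
  have h1 : (∏ j, lam j) ≠ 0 := by rw [← detJ_prod hlam]; exact hdet
  intro j
  exact Finset.prod_ne_zero_iff.mp h1 j (Finset.mem_univ j)

lemma q_zero {J : Matrix (Fin (N+1)) (Fin (N+1)) ℝ} {lam : Fin (N+1) → ℝ}
    (hlam : J.charpoly = ∏ j, (X - C (lam j))) :
    q J 0 = ∏ j, (X - C ((lam j : ℂ))) := by
  rw [q_eq]
  rw [show (Complex.I * ((0:ℝ):ℂ)) = 0 from by simp]
  rw [map_zero, zero_mul, sub_zero, hlam, Polynomial.map_prod]
  refine Finset.prod_congr rfl fun j _ => ?_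
  simp

lemma loc_const {J : Matrix (Fin (N+1)) (Fin (N+1)) ℝ} (hJ : IsJacobi J) (hdet : J.det ≠ 0)
    {l₀ : ℝ} (h0 : 0 < l₀) :
    ∀ᶠ l' in nhds l₀, 0 < l' → (cnt J l' = cnt J l₀ ∧
      sArg J l' - Real.arctan l' = sArg J l₀ - Real.arctan l₀) := by
  by_contra hcon
  obtain ⟨ls, hpos, hto, hne⟩ := exists_seq_of_not_eventually hcon
  obtain ⟨φ, hφ, w, W, hw, hWk, hconv⟩ := key_subseq J hto
  have hrootw : ∀ i, (q J l₀).IsRoot (w i) := by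
    intro i
    rw [Polynomial.IsRoot, hw, Polynomial.eval_prod]
    exact Finset.prod_eq_zero (Finset.mem_univ i) (by simp)
  have himne : ∀ i, (w i).im ≠ 0 := by
    intro i h
    have := quadrant hJ hdet h0 (hrootw i)
    rw [h] at this
    simp at this
  have hsigns : ∀ᶠ k in atTop, ∀ i, (0 < (W k i).im ↔ 0 < (w i).im) := by
    rw [eventually_all]
    intro i
    have h1 : Tendsto (fun k => (W k i).im) atTop (𝓝 ((w i).im)) :=
      (Complex.continuous_im.continuousAt.tendsto).comp (hconv i)
    rcases (himne i).lt_or_gt with hneg | hpos'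
    · filter_upwards [h1.eventually (eventually_lt_nhds hneg)] with k hk
      exact iff_of_false (by linarith) (by linarith)
    · filter_upwards [h1.eventually (eventually_gt_nhds hpos')] with k hk
      exact iff_of_true hk hpos'
  have hcnt : ∀ᶠ k in atTop, cnt J (ls (φ k)) = cnt J l₀ := by
    filter_upwards [hsigns] with k hk
    rw [cnt_label (hWk k), cnt_label hw]
    congr 1
    exact Finset.filter_congr fun i _ => hk i
  have hGconv : Tendsto (fun k => sArg J (ls (φ k)) - Real.arctan (ls (φ k))) atTop
      (𝓝 (sArg J l₀ - Real.arctan l₀)) := by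
    have h1 : Tendsto (fun k => sArg J (ls (φ k))) atTop (𝓝 (sArg J l₀)) := by
      rw [sArg_label hw]
      rw [show (fun k => sArg J (ls (φ k))) = fun k => ∑ i, argPi (W k i) from
        funext fun k => sArg_label (hWk k)]
      exact tendsto_finset_sum _ fun i _ =>
        ((continuousAt_argPi (himne i)).tendsto).comp (hconv i)
    have h3 : Tendsto (fun k => Real.arctan (ls (φ k))) atTop (𝓝 (Real.arctan l₀)) :=
      (Real.continuous_arctan.continuousAt.tendsto).comp (hto.comp hφ.tendsto_atTop)
    exact h1.sub h3
  have hGev : ∀ᶠ k in atTop, sArg J (ls (φ k)) - Real.arctan (ls (φ k))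
      = sArg J l₀ - Real.arctan l₀ := by
    obtain ⟨n₀, hn₀⟩ := sArg_mod hJ hdet h0
    obtain ⟨K, hK⟩ := Metric.tendsto_atTop.mp hGconv Real.pi Real.pi_pos
    rw [Filter.eventually_atTop]
    refine ⟨K, fun k hk => ?_⟩
    obtain ⟨nk, hnk⟩ := sArg_mod hJ hdet (hpos (φ k))
    have hd := hK k hk
    rw [Real.dist_eq] at hd
    have heq1 : (sArg J (ls (φ k)) - Real.arctan (ls (φ k))) - (sArg J l₀ - Real.arctan l₀)
        = ((nk - n₀ : ℤ) : ℝ) * Real.pi := by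
      rw [hnk, hn₀]
      push_cast
      ring
    rw [heq1] at hd
    have hnn : nk = n₀ := by
      rw [abs_mul, abs_of_pos Real.pi_pos] at hd
      have h1 : |((nk - n₀ : ℤ) : ℝ)| < 1 := by
        by_contra hge
        push_neg at hge
        nlinarith [Real.pi_pos]
      have h2 : ((|nk - n₀| : ℤ) : ℝ) < 1 := by rwa [Int.cast_abs]
      have h3 : |nk - n₀| < 1 := by exact_mod_cast h2
      have h4 : nk - n₀ = 0 := by
        rcases abs_lt.mp h3 with ⟨hlo, hhi⟩
        omega
      omega
    rw [hnk, hn₀, hnn]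
    ring
  obtain ⟨k, hk1, hk2⟩ := (hcnt.and hGev).exists
  exact hne (φ k) ⟨hk1, hk2⟩

lemma lim_zero {J : Matrix (Fin (N+1)) (Fin (N+1)) ℝ} (hJ : IsJacobi J) (hdet : J.det ≠ 0)
    {lam : Fin (N+1) → ℝ} (hlam : J.charpoly = ∏ j, (X - C (lam j)))
    {l : ℝ} (hl : 0 < l) :
    cnt J l = (Finset.univ.filter fun j => 0 < lam j).card ∧ sArg J l = Real.arctan l := by
  classical
  set ls : ℕ → ℝ := fun k => 1/(k+1) with hls
  have hpos : ∀ k, 0 < ls k := fun k => by positivity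
  have hto : Tendsto ls atTop (𝓝 0) := by
    have h := tendsto_one_div_add_atTop_nhds_zero_nat (𝕜 := ℝ)
    simpa [hls] using h
  obtain ⟨φ, hφ, w, W, hw, hWk, hconv⟩ := key_subseq J hto
  have hq0 : q J 0 = ∏ j, (X - C ((lam j : ℂ))) := q_zero hlam
  have hlamne : ∀ j, lam j ≠ 0 := lam_ne hlam hdet
  have hwreal : ∀ i, ∃ j, w i = ((lam j : ℂ)) := by
    intro i
    have hr : (q J 0).IsRoot (w i) := by
      rw [Polynomial.IsRoot, hw, Polynomial.eval_prod]
      exact Finset.prod_eq_zero (Finset.mem_univ i) (by simp)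
    rw [Polynomial.IsRoot, hq0, Polynomial.eval_prod] at hr
    obtain ⟨j, _, hj⟩ := Finset.prod_eq_zero_iff.mp hr
    refine ⟨j, ?_⟩
    simp only [Polynomial.eval_sub, Polynomial.eval_X, Polynomial.eval_C] at hj
    exact sub_eq_zero.mp hj
  choose jv hjv using hwreal
  have hwre : ∀ i, (w i).re = lam (jv i) := fun i => by rw [hjv i, Complex.ofReal_re]
  have hwim : ∀ i, (w i).im = 0 := fun i => by rw [hjv i, Complex.ofReal_im]
  have hwrene : ∀ i, (w i).re ≠ 0 := fun i => by rw [hwre i]; exact hlamne (jv i)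
  have hrootW : ∀ k i, (q J (ls (φ k))).IsRoot (W k i) := by
    intro k i
    rw [Polynomial.IsRoot, hWk k, Polynomial.eval_prod]
    exact Finset.prod_eq_zero (Finset.mem_univ i) (by simp)
  have hquadW : ∀ k i, 0 < (W k i).re * (W k i).im :=
    fun k i => quadrant hJ hdet (hpos (φ k)) (hrootW k i)
  have hreconv : ∀ i, Tendsto (fun k => (W k i).re) atTop (𝓝 ((w i).re)) :=
    fun i => (Complex.continuous_re.continuousAt.tendsto).comp (hconv i)
  have hsigns : ∀ᶠ k in atTop, ∀ i, ((0 < (W k i).im ↔ 0 < (w i).re)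
      ∧ ((W k i).im < 0 ↔ (w i).re < 0)) := by
    rw [eventually_all]
    intro i
    rcases (hwrene i).lt_or_gt with hneg | hpos'
    · filter_upwards [(hreconv i).eventually (eventually_lt_nhds hneg)] with k hk
      have hq := hquadW k i
      have him : (W k i).im < 0 := by nlinarith
      exact ⟨iff_of_false (by linarith) (by linarith), iff_of_true him hneg⟩
    · filter_upwards [(hreconv i).eventually (eventually_gt_nhds hpos')] with k hk
      have hq := hquadW k i
      have him : 0 < (W k i).im := by nlinarith
      exact ⟨iff_of_true him hpos', iff_of_false (by linarith) (by linarith)⟩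
  have hcnt_const : ∀ k, cnt J l = cnt J (ls (φ k)) := by
    intro k
    exact const_of_loc (fun l₀ h0 => (loc_const hJ hdet h0).mono
      (fun l' h' hp => (h' hp).1)) hl (hpos (φ k))
  have hG_const : ∀ k, sArg J l - Real.arctan l
      = sArg J (ls (φ k)) - Real.arctan (ls (φ k)) := by
    intro k
    exact const_of_loc (fun l₀ h0 => (loc_const hJ hdet h0).mono
      (fun l' h' hp => (h' hp).2)) hl (hpos (φ k))
  have hms : Finset.univ.val.map w = Finset.univ.val.map (fun j => ((lam j : ℂ))) := by
    have h1 : (q J 0).roots = Finset.univ.val.map w := by rw [hw, roots_prod_fun]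
    have h2 : (q J 0).roots = Finset.univ.val.map (fun j => ((lam j : ℂ))) := by
      rw [hq0, roots_prod_fun]
    rw [← h1, h2]
  have hcard_re : (Finset.univ.filter fun i => 0 < (w i).re).card
      = (Finset.univ.filter fun j => 0 < lam j).card := by
    have hc := congrArg (Multiset.countP (fun t : ℂ => 0 < t.re)) hms
    rw [Multiset.countP_map, Multiset.countP_map] at hc
    have e1 : (Finset.univ.filter fun i => 0 < (w i).re).card
        = Multiset.card (Multiset.filter (fun i => 0 < (w i).re) Finset.univ.val) := rfl
    have e2 : (Finset.univ.filter fun j => 0 < lam j).card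
        = Multiset.card (Multiset.filter (fun j => 0 < ((lam j : ℂ)).re)
            (Finset.univ.val : Multiset (Fin (N+1)))) := by
      have hpe : Multiset.filter (fun j => 0 < ((lam j : ℂ)).re)
            (Finset.univ.val : Multiset (Fin (N+1)))
          = Multiset.filter (fun j => 0 < lam j) Finset.univ.val :=
        Multiset.filter_congr (fun j _ => by simp)
      rw [hpe]; rfl
    rw [e1, e2, hc]
  constructor
  · obtain ⟨k, hk⟩ := hsigns.exists
    rw [hcnt_const k, cnt_label (hWk k), ← hcard_re]
    congr 1
    exact Finset.filter_congr fun i _ => (hk i).1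
  · have hGlim : Tendsto (fun k => sArg J (ls (φ k)) - Real.arctan (ls (φ k))) atTop
        (𝓝 0) := by
      have h1 : Tendsto (fun k => sArg J (ls (φ k))) atTop (𝓝 0) := by
        rw [show (fun k => sArg J (ls (φ k))) = fun k => ∑ i, argPi (W k i) from
          funext fun k => sArg_label (hWk k)]
        have hzero : ∀ i : Fin (N+1), Tendsto (fun k => argPi (W k i)) atTop (𝓝 0) := by
          intro i
          rcases (hwrene i).lt_or_gt with hneg | hpos'
          · have hev : ∀ᶠ k in atTop, argPi (W k i) = Real.pi + Complex.arg (W k i) := by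
              filter_upwards [hsigns] with k hk
              have him : (W k i).im < 0 := (hk i).2.mpr hneg
              rw [argPi, if_neg (by linarith), if_pos him]
            have harg : Tendsto (fun k => Complex.arg (W k i)) atTop (𝓝 (-Real.pi)) := by
              have hin : Tendsto (fun k => W k i) atTop (𝓝[{z : ℂ | z.im < 0}] (w i)) := by
                rw [tendsto_nhdsWithin_iff]
                refine ⟨hconv i, ?_⟩
                filter_upwards [hsigns] with k hk
                exact (hk i).2.mpr hneg
              exact (Complex.tendsto_arg_nhdsWithin_im_neg_of_re_neg_of_im_zero hneg
                (hwim i)).comp hin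
            have hadd : Tendsto (fun k => Real.pi + Complex.arg (W k i)) atTop
                (𝓝 (Real.pi + -Real.pi)) := tendsto_const_nhds.add harg
            rw [show Real.pi + -Real.pi = 0 from by ring] at hadd
            exact Filter.Tendsto.congr' (by
              filter_upwards [hev] with k hk; exact hk.symm) hadd
          · have hev : ∀ᶠ k in atTop, argPi (W k i) = Complex.arg (W k i) := by
              filter_upwards [hsigns] with k hk
              rw [argPi, if_pos ((hk i).1.mpr hpos')]
            have harg : Tendsto (fun k => Complex.arg (W k i)) atTop (𝓝 0) := by
              have hcarg : ContinuousAt Complex.arg (w i) :=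
                Complex.continuousAt_arg (Or.inl hpos')
              have h0 : Complex.arg (w i) = 0 := by
                rw [hjv i]
                exact Complex.arg_ofReal_of_nonneg
                  (le_of_lt (by rw [← hwre i]; exact hpos'))
              rw [← h0]
              exact hcarg.tendsto.comp (hconv i)
            exact Filter.Tendsto.congr' (by
              filter_upwards [hev] with k hk; exact hk.symm) harg
        have h4 := tendsto_finset_sum Finset.univ
          (fun i (_ : i ∈ Finset.univ) => hzero i)
        simpa using h4
      have h2 : Tendsto (fun k => Real.arctan (ls (φ k))) atTop (𝓝 0) := by
        have h3 := (Real.continuous_arctan.continuousAt.tendsto).comp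
          (hto.comp hφ.tendsto_atTop)
        simpa [Real.arctan_zero, Function.comp_def] using h3
      simpa using h1.sub h2
    have hconst : Tendsto (fun _ : ℕ => sArg J l - Real.arctan l) atTop
        (𝓝 (sArg J l - Real.arctan l)) := tendsto_const_nhds
    have hfin : sArg J l - Real.arctan l = 0 :=
      tendsto_nhds_unique (hconst.congr fun k => hG_const k) hGlim
    linarith

end Stmt3Aux

/-- for l > 0 and a Jacobi matrix J with det J ≠ 0, all eigenvalues of
J_{l,×} are nonreal, Σ Arg_{[0,π)} z_j = arctan l, and the number of eigenvalues of
J_{l,×} in ℂ₊ (resp. ℂ₋), with multiplicity, equals the number of positive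
(resp. negative) eigenvalues of J. -/
theorem stmt3 (N : ℕ) (l : ℝ) (hl : 0 < l) (J : Matrix (Fin (N + 1)) (Fin (N + 1)) ℝ)
    (hJ : IsJacobi J) (hdet : J.det ≠ 0)
    (z : Fin (N + 1) → ℂ) (hz : (mulPert l J).charpoly = ∏ j, (X - C (z j)))
    (lam : Fin (N + 1) → ℝ) (hlam : J.charpoly = ∏ j, (X - C (lam j))) :
    (∀ j, (z j).im ≠ 0) ∧
    (∑ j, argPi (z j) = Real.arctan l) ∧
    ((Finset.univ.filter fun j => 0 < (z j).im).card =
      (Finset.univ.filter fun j => 0 < lam j).card) ∧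
    ((Finset.univ.filter fun j => (z j).im < 0).card =
      (Finset.univ.filter fun j => lam j < 0).card) := by
  classical
  have hq : Stmt3Aux.q J l = ∏ j, (X - C (z j)) := hz
  have hrootz : ∀ j, (Stmt3Aux.q J l).IsRoot (z j) := by
    intro j
    rw [Polynomial.IsRoot, hq, Polynomial.eval_prod]
    exact Finset.prod_eq_zero (Finset.mem_univ j) (by simp)
  have hquad : ∀ j, 0 < (z j).re * (z j).im :=
    fun j => Stmt3Aux.quadrant hJ hdet hl (hrootz j)
  have him : ∀ j, (z j).im ≠ 0 := by
    intro j h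
    have := hquad j
    rw [h] at this
    simp at this
  obtain ⟨hcnt, hsum⟩ := Stmt3Aux.lim_zero hJ hdet hlam hl
  have hlamne : ∀ j, lam j ≠ 0 := Stmt3Aux.lam_ne hlam hdet
  have hposcard : (Finset.univ.filter fun j => 0 < (z j).im).card =
      (Finset.univ.filter fun j => 0 < lam j).card := by
    rw [← Stmt3Aux.cnt_label hq]
    exact hcnt
  refine ⟨him, ?_, hposcard, ?_⟩
  · rw [← Stmt3Aux.sArg_label hq]
    exact hsum
  · have h1 : (Finset.univ.filter fun j => (z j).im < 0)
        = Finset.univ \ (Finset.univ.filter fun j => 0 < (z j).im) := by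
      rw [← Finset.filter_not]
      exact Finset.filter_congr fun j _ =>
        ⟨fun h h' => by linarith, fun h => (him j).lt_or_gt.resolve_right h⟩
    have h2 : (Finset.univ.filter fun j => lam j < 0)
        = Finset.univ \ (Finset.univ.filter fun j => 0 < lam j) := by
      rw [← Finset.filter_not]
      exact Finset.filter_congr fun j _ =>
        ⟨fun h h' => by linarith, fun h => (hlamne j).lt_or_gt.resolve_right h⟩
    rw [h1, h2, Finset.card_sdiff_of_subset (Finset.filter_subset _ _),
      Finset.card_sdiff_of_subset (Finset.filter_subset _ _), hposcard]
end

section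
/- Fix distinct real numbers λ_1,…,λ_n. On the open simplex U = {(w_1,…,w_{n−1}) ∈ ℝ^{n−1} : w_j > 0, Σ_{j=1}^{n−1} w_j < 1}, set w_n := 1 − Σ_{j=1}^{n−1} w_j and let q(z) = Σ_{j=0}^{n−1} q_j z^j (with q_{n−1} = 1) be defined by q(z) := Σ_{j=1}^n w_j ∏_{k≠j} (z − λ_k). Then the map (w_1,…,w_{n−1}) ↦ (q_0,…,q_{n−2}) is differentiable on U and the absolute value of the determinant of its Jacobian matrix equals ∏_{1≤j<k≤n} |λ_j − λ_k| at every point of U. -/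
open Polynomial

/-- The map from weights (w₁,…,w_{n−1}) on the open simplex to the lower coefficients
(q₀,…,q_{n−2}) of q(z) = Σ_j w_j ∏_{k≠j} (z−λ_k), where w_n := 1 − Σ_{j<n} w_j. -/
noncomputable def weightsToCoeffs {m : ℕ} (lam : Fin (m + 1) → ℝ) (v : Fin m → ℝ)
    (i : Fin m) : ℝ :=
  (∑ j, C (Fin.snoc v (1 - ∑ k, v k) j) *
      ∏ k ∈ Finset.univ.erase j, (X - C (lam k))).coeff (i : ℕ)


variable {m : ℕ}

noncomputable def Pj (lam : Fin (m + 1) → ℝ) (j : Fin (m + 1)) : ℝ[X] :=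
  ∏ k ∈ Finset.univ.erase j, (X - C (lam k))

lemma Pj_monic (lam : Fin (m + 1) → ℝ) (j : Fin (m + 1)) : (Pj lam j).Monic :=
  monic_prod_of_monic _ _ fun k _ => monic_X_sub_C (lam k)

lemma Pj_natDegree (lam : Fin (m + 1) → ℝ) (j : Fin (m + 1)) : (Pj lam j).natDegree = m := by
  rw [Pj, natDegree_prod_of_monic _ _ fun k _ => monic_X_sub_C (lam k)]
  simp [Finset.card_erase_of_mem]

lemma Pj_coeff_top (lam : Fin (m + 1) → ℝ) (j : Fin (m + 1)) : (Pj lam j).coeff m = 1 := by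
  have := (Pj_monic lam j).coeff_natDegree
  rwa [Pj_natDegree] at this

lemma Pj_eval (lam : Fin (m + 1) → ℝ) (j : Fin (m + 1)) (x : ℝ) :
    (Pj lam j).eval x = ∏ k ∈ Finset.univ.erase j, (x - lam k) := by
  simp [Pj, eval_prod]

noncomputable def Amat (lam : Fin (m + 1) → ℝ) : Matrix (Fin m) (Fin m) ℝ :=
  fun i j => (Pj lam j.castSucc).coeff i - (Pj lam (Fin.last m)).coeff i

lemma wtc_eq (lam : Fin (m + 1) → ℝ) (v : Fin m → ℝ) :
    weightsToCoeffs lam v =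
      (Amat lam).mulVec v + fun i : Fin m => (Pj lam (Fin.last m)).coeff i := by
  funext i
  have h1 : weightsToCoeffs lam v i
      = ∑ j : Fin m, v j * (Pj lam j.castSucc).coeff i
        + (1 - ∑ k, v k) * (Pj lam (Fin.last m)).coeff i := by
    rw [weightsToCoeffs, finset_sum_coeff, Fin.sum_univ_castSucc]
    simp only [Fin.snoc_castSucc, Fin.snoc_last, coeff_C_mul, Pj]
  rw [h1]
  simp only [Pi.add_apply, Matrix.mulVec, dotProduct, Amat]
  simp only [sub_mul, one_mul, Finset.sum_sub_distrib, Finset.sum_mul]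
  simp only [mul_comm]
  ring

noncomputable def Mmat (lam : Fin (m + 1) → ℝ) : Matrix (Fin (m + 1)) (Fin (m + 1)) ℝ :=
  fun i j => (Pj lam j).coeff i

noncomputable def Emat (m : ℕ) : Matrix (Fin (m + 1)) (Fin (m + 1)) ℝ :=
  fun i j => (if i = j then 1 else 0) + (if i = Fin.last m ∧ j ≠ Fin.last m then -1 else 0)

lemma Emat_det (m : ℕ) : (Emat m).det = 1 := by
  have h : Matrix.BlockTriangular (Emat m) OrderDual.toDual := by
    intro i j hij
    have hij' : i < j := hij
    have h1 : i ≠ j := hij'.ne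
    have h2 : ¬ (i = Fin.last m ∧ j ≠ Fin.last m) := by
      rintro ⟨rfl, -⟩
      exact absurd hij' (by simp [Fin.le_last j, not_lt])
    simp [Emat, h1, h2]
  rw [Matrix.det_of_lowerTriangular _ h]
  simp [Emat]

lemma mulE_last (lam : Fin (m + 1) → ℝ) (i : Fin (m + 1)) :
    (Mmat lam * Emat m) i (Fin.last m) = Mmat lam i (Fin.last m) := by
  rw [Matrix.mul_apply]
  simp [Emat, mul_ite]

lemma mulE_ne (lam : Fin (m + 1) → ℝ) (i j : Fin (m + 1)) (hj : j ≠ Fin.last m) :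
    (Mmat lam * Emat m) i j = Mmat lam i j - Mmat lam i (Fin.last m) := by
  rw [Matrix.mul_apply]
  simp [Emat, hj, mul_add, mul_ite, Finset.sum_add_distrib, sub_eq_add_neg]

lemma Mmat_last_row (lam : Fin (m + 1) → ℝ) (j : Fin (m + 1)) :
    Mmat lam (Fin.last m) j = 1 := by
  have : ((Fin.last m : Fin (m+1)) : ℕ) = m := Fin.val_last m
  rw [Mmat, this, Pj_coeff_top]

lemma det_Amat (lam : Fin (m + 1) → ℝ) : (Amat lam).det = (Mmat lam).det := by
  have hME : (Mmat lam * Emat m).det = (Mmat lam).det := by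
    rw [Matrix.det_mul, Emat_det, mul_one]
  rw [← hME, Matrix.det_succ_row (Mmat lam * Emat m) (Fin.last m)]
  rw [Finset.sum_eq_single (Fin.last m)]
  · have he : ((Mmat lam * Emat m).submatrix (Fin.last m).succAbove
        (Fin.last m).succAbove) = Amat lam := by
      funext i j
      rw [Fin.succAbove_last]
      simp only [Matrix.submatrix_apply]
      rw [mulE_ne lam _ _ (Fin.castSucc_lt_last j).ne, Amat, Mmat, Mmat]
      simp [Fin.coe_castSucc]
    rw [he, mulE_last, Mmat_last_row]
    have : (-1 : ℝ) ^ ((Fin.last m : Fin (m+1)) + (Fin.last m : Fin (m+1)) : ℕ) = 1 := by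
      rw [Fin.val_last]
      exact Even.neg_one_pow ⟨m, rfl⟩
    rw [this]; ring
  · intro j _ hj
    rw [mulE_ne lam _ _ hj, Mmat_last_row, Mmat_last_row]
    simp
  · intro h; exact absurd (Finset.mem_univ _) h

lemma vand_mul (lam : Fin (m + 1) → ℝ) (hlam : Function.Injective lam) :
    Matrix.vandermonde lam * Mmat lam =
      Matrix.diagonal (fun j => ∏ k ∈ Finset.univ.erase j, (lam j - lam k)) := by
  funext k j
  rw [Matrix.mul_apply]
  have he : ∑ i : Fin (m + 1), Matrix.vandermonde lam k i * Mmat lam i j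
      = (Pj lam j).eval (lam k) := by
    rw [eval_eq_sum_range, Pj_natDegree,
      ← Fin.sum_univ_eq_sum_range (fun i => (Pj lam j).coeff i * lam k ^ i) (m + 1)]
    exact Finset.sum_congr rfl fun i _ => by
      rw [Matrix.vandermonde_apply, Mmat, mul_comm]
  rw [he, Pj_eval]
  rcases eq_or_ne k j with rfl | hkj
  · simp [Matrix.diagonal_apply_eq]
  · rw [Matrix.diagonal_apply_ne _ hkj]
    exact Finset.prod_eq_zero (Finset.mem_erase.mpr ⟨hkj, Finset.mem_univ k⟩) (by simp)

lemma prod_pairs (n : ℕ) (f : Fin n → Fin n → ℝ) :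
    ∏ p ∈ Finset.univ.filter (fun p : Fin n × Fin n => p.1 < p.2), f p.1 p.2
      = ∏ i, ∏ j ∈ Finset.Ioi i, f i j :=
  Finset.prod_finset_product' _ _ _ (by simp)

lemma abs_det_Mmat (lam : Fin (m + 1) → ℝ) (hlam : Function.Injective lam) :
    |(Mmat lam).det| =
      ∏ p ∈ Finset.univ.filter (fun p : Fin (m + 1) × Fin (m + 1) => p.1 < p.2),
        |lam p.1 - lam p.2| := by
  set T := ∏ p ∈ Finset.univ.filter (fun p : Fin (m + 1) × Fin (m + 1) => p.1 < p.2),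
      |lam p.1 - lam p.2| with hTdef
  have hT : T = ∏ i, ∏ j ∈ Finset.Ioi i, |lam i - lam j| :=
    prod_pairs (m + 1) fun i j => |lam i - lam j|
  have hTpos : 0 < T := by
    refine Finset.prod_pos fun p hp => abs_pos.mpr (sub_ne_zero.mpr (hlam.ne ?_))
    exact ((Finset.mem_filter.mp hp).2).ne
  have hV : |(Matrix.vandermonde lam).det| = T := by
    rw [Matrix.det_vandermonde, Finset.abs_prod, hT]
    refine Finset.prod_congr rfl fun i _ => ?_
    rw [Finset.abs_prod]
    exact Finset.prod_congr rfl fun j _ => abs_sub_comm _ _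
  have hsplit : ∀ j : Fin (m + 1), Finset.univ.erase j = Finset.Ioi j ∪ Finset.Iio j := by
    intro j; ext k
    simp only [Finset.mem_erase, Finset.mem_univ, and_true, Finset.mem_union,
      Finset.mem_Ioi, Finset.mem_Iio, ne_iff_lt_or_gt]
    tauto
  have hdisj : ∀ j : Fin (m + 1), Disjoint (Finset.Ioi j) (Finset.Iio j) := by
    intro j
    rw [Finset.disjoint_left]
    intro a ha hb
    exact absurd (Finset.mem_Iio.mp hb) (not_lt.mpr (le_of_lt (Finset.mem_Ioi.mp ha)))
  have hdiag : |∏ j, ∏ k ∈ Finset.univ.erase j, (lam j - lam k)| = T * T := by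
    rw [Finset.abs_prod]
    have : ∀ j : Fin (m + 1), |∏ k ∈ Finset.univ.erase j, (lam j - lam k)|
        = (∏ k ∈ Finset.Ioi j, |lam j - lam k|) * ∏ k ∈ Finset.Iio j, |lam j - lam k| := by
      intro j
      rw [Finset.abs_prod, hsplit j, Finset.prod_union (hdisj j)]
    rw [Finset.prod_congr rfl fun j _ => this j, Finset.prod_mul_distrib]
    congr 1
    · exact hT.symm
    · rw [Finset.prod_comm' (t' := (Finset.univ : Finset (Fin (m+1))))
        (s' := fun k => Finset.Ioi k) (by simp)]
      rw [hT]
      exact Finset.prod_congr rfl fun i _ =>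
        Finset.prod_congr rfl fun j _ => abs_sub_comm _ _
  have hmain : |(Matrix.vandermonde lam).det| * |(Mmat lam).det| = T * T := by
    rw [← abs_mul, ← Matrix.det_mul, vand_mul lam hlam, Matrix.det_diagonal, hdiag]
  rw [hV] at hmain
  exact mul_left_cancel₀ (ne_of_gt hTpos) hmain


/-- for fixed distinct reals λ₁,…,λ_n (n = m+1), the map
(w₁,…,w_{n−1}) ↦ (q₀,…,q_{n−2}) is differentiable on the open simplex and the absolute
value of its Jacobian determinant there equals ∏_{j<k} |λ_j − λ_k|. -/
theorem stmt7 (m : ℕ) (lam : Fin (m + 1) → ℝ) (hlam : Function.Injective lam)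
    (w : Fin m → ℝ) (hw : ∀ j, 0 < w j) (hw1 : ∑ j, w j < 1) :
    DifferentiableAt ℝ (weightsToCoeffs lam) w ∧
    |LinearMap.det ((fderiv ℝ (weightsToCoeffs lam) w).toLinearMap)| =
      ∏ p ∈ Finset.univ.filter (fun p : Fin (m + 1) × Fin (m + 1) => p.1 < p.2),
        |lam p.1 - lam p.2| := by
  classical
  set L : (Fin m → ℝ) →L[ℝ] (Fin m → ℝ) :=
    LinearMap.toContinuousLinearMap (Matrix.toLin' (Amat lam)) with hL
  have hfun : weightsToCoeffs lam =
      fun v => L v + fun i : Fin m => (Pj lam (Fin.last m)).coeff i := by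
    funext v
    rw [wtc_eq]
    simp [hL, Matrix.toLin'_apply]
  have hdiff : DifferentiableAt ℝ (weightsToCoeffs lam) w := by
    rw [hfun]
    exact (L.differentiableAt).add_const _
  refine ⟨hdiff, ?_⟩
  have hfd : fderiv ℝ (weightsToCoeffs lam) w = L := by
    rw [hfun, fderiv_add_const, L.fderiv]
  rw [hfd]
  have hcoe : (L.toLinearMap : (Fin m → ℝ) →ₗ[ℝ] (Fin m → ℝ)) = Matrix.toLin' (Amat lam) := by
    simp [hL]
  rw [hcoe, LinearMap.det_toLin', det_Amat, abs_det_Mmat lam hlam]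
end

section
/- Let λ_1,…,λ_n be distinct nonzero reals, w_1,…,w_n > 0 with Σ_{j=1}^n w_j = 1, l > 0, and let z_1,…,z_n be the roots (with multiplicity) of P_l(z) := (1+il)∏_{j=1}^n(z−λ_j) − i l z Σ_{j=1}^n w_j ∏_{k≠j}(z−λ_k). Then ∏_{j=1}^n w_j = ∏_{j,k=1}^n |z_j − \bar{z}_k| / ( (2l)^n · ∏_{1≤j<k≤n} |λ_j − λ_k|² · |Re(∏_{j=1}^n z_j)| ). -/
open Polynomial

private theorem pairsq (n : ℕ) (f : Fin n → Fin n → ℝ) (hsym : ∀ j k, f j k = f k j) :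
    ∏ j, ∏ k ∈ Finset.univ.erase j, f j k =
      ∏ p ∈ Finset.univ.filter (fun p : Fin n × Fin n => p.1 < p.2), (f p.1 p.2) ^ 2 := by
  have h1 : ∏ j, ∏ k ∈ Finset.univ.erase j, f j k
      = ∏ p ∈ (Finset.univ ×ˢ Finset.univ).filter (fun p : Fin n × Fin n => p.2 ≠ p.1), f p.1 p.2 := by
    rw [Finset.prod_filter, Finset.prod_product]
    refine Finset.prod_congr rfl fun j _ => ?_
    rw [← Finset.filter_ne', Finset.prod_filter]
  have h2 : (Finset.univ ×ˢ Finset.univ).filter (fun p : Fin n × Fin n => p.2 ≠ p.1)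
      = (Finset.univ.filter (fun p : Fin n × Fin n => p.1 < p.2)) ∪
        (Finset.univ.filter (fun p : Fin n × Fin n => p.2 < p.1)) := by
    rw [Finset.univ_product_univ, ← Finset.filter_or]
    refine Finset.filter_congr fun p _ => ?_
    constructor
    · intro h; exact lt_or_gt_of_ne h.symm
    · rintro (h | h); exacts [h.ne', h.ne]
  have hdisj : Disjoint (Finset.univ.filter (fun p : Fin n × Fin n => p.1 < p.2))
      (Finset.univ.filter (fun p : Fin n × Fin n => p.2 < p.1)) := by
    rw [Finset.disjoint_filter]
    intro p _ h1 h2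
    exact absurd h1 (not_lt_of_gt h2)
  have h3 : ∏ p ∈ Finset.univ.filter (fun p : Fin n × Fin n => p.2 < p.1), f p.1 p.2
      = ∏ p ∈ Finset.univ.filter (fun p : Fin n × Fin n => p.1 < p.2), f p.1 p.2 := by
    refine Finset.prod_nbij' Prod.swap Prod.swap ?_ ?_ ?_ ?_ ?_ <;>
      simp [hsym _ _]
  rw [h1, h2, Finset.prod_union hdisj, h3, ← Finset.prod_mul_distrib]
  exact Finset.prod_congr rfl fun p _ => (sq (f p.1 p.2)).symm

/-- with λ_j distinct nonzero reals, weights w_j > 0 summing to 1, l > 0, and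
z_1,…,z_n the roots (with multiplicity) of P_l(z) = (1+il)∏(z−λ_j) − i l z Σ w_j ∏_{k≠j}(z−λ_k):
∏ w_j = ∏_{j,k} |z_j − z̄_k| / ((2l)^n · ∏_{j<k} |λ_j − λ_k|² · |Re ∏ z_j|). -/
theorem stmt11 (m : ℕ) (lam : Fin (m + 1) → ℝ) (hlam : Function.Injective lam)
    (hlam0 : ∀ j, lam j ≠ 0)
    (w : Fin (m + 1) → ℝ) (hw : ∀ j, 0 < w j) (hw1 : ∑ j, w j = 1)
    (l : ℝ) (hl : 0 < l) (z : Fin (m + 1) → ℂ)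
    (hz : C (1 + Complex.I * l) * ∏ j, (X - C (lam j : ℂ)) -
        C (Complex.I * l) *
          (X * ∑ j, C (w j : ℂ) * ∏ k ∈ Finset.univ.erase j, (X - C (lam k : ℂ))) =
      ∏ j, (X - C (z j))) :
    ∏ j, w j =
      (∏ j, ∏ k, ‖z j - (starRingEnd ℂ) (z k)‖) /
        ((2 * l) ^ (m + 1) *
          (∏ p ∈ Finset.univ.filter (fun p : Fin (m + 1) × Fin (m + 1) => p.1 < p.2),
            |lam p.1 - lam p.2| ^ 2) *
          |(∏ j, z j).re|) := by
  have hzc := congrArg (Polynomial.map (starRingEnd ℂ)) hz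
  simp only [Polynomial.map_sub, Polynomial.map_mul, Polynomial.map_prod, Polynomial.map_sum,
    Polynomial.map_C, Polynomial.map_X, Polynomial.map_add, Polynomial.map_one,
    map_add, map_one, map_mul, map_neg, Complex.conj_I, Complex.conj_ofReal] at hzc
  have hsum : (∏ j, (X - C (z j))) + (∏ j, (X - C ((starRingEnd ℂ) (z j)))) =
      2 * ∏ j, (X - C (lam j : ℂ)) := by
    rw [← hz, ← hzc]
    simp only [map_add, map_one, map_mul]
    ring
  -- Step B: ∏_k (z_j - z̄_k) = 2 ∏_k (z_j - λ_k)
  have hB : ∀ j, (∏ k, (z j - (starRingEnd ℂ) (z k))) = 2 * ∏ k, (z j - (lam k : ℂ)) := by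
    intro j
    have h0 : (∏ k, (z j - z k)) = 0 :=
      Finset.prod_eq_zero (Finset.mem_univ j) (by ring)
    have := congrArg (Polynomial.eval (z j)) hsum
    simpa [eval_prod, h0] using this
  -- Step C: ∏_j (λ_k - z_j) = -(il) λ_k w_k ∏_{k'≠k} (λ_k - λ_k')
  have hC : ∀ k, (∏ j, ((lam k : ℂ) - z j)) =
      -(Complex.I * l) * (lam k) * (w k) * ∏ k' ∈ Finset.univ.erase k, ((lam k : ℂ) - lam k') := by
    intro k
    have := congrArg (Polynomial.eval ((lam k : ℂ))) hz
    have h0 : (∏ j, ((lam k : ℂ) - (lam j : ℂ))) = 0 :=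
      Finset.prod_eq_zero (Finset.mem_univ k) (by ring)
    have hQ : (∑ j, (w j : ℂ) * ∏ k' ∈ Finset.univ.erase j, ((lam k : ℂ) - lam k')) =
        (w k : ℂ) * ∏ k' ∈ Finset.univ.erase k, ((lam k : ℂ) - lam k') := by
      refine Finset.sum_eq_single k (fun j _ hj => ?_) (by simp)
      rw [Finset.prod_eq_zero (Finset.mem_erase.mpr ⟨Ne.symm hj, Finset.mem_univ k⟩) (by ring)]
      ring
    rw [eval_prod] at this
    simp only [eval_sub, eval_mul, eval_prod, eval_C, eval_X, eval_finset_sum] at this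
    rw [h0, hQ] at this
    rw [← this]; ring
  -- Step D: ∏ z_j = (1+il) ∏ λ_j
  have hD : (∏ j, z j) = (1 + Complex.I * l) * ∏ j, (lam j : ℂ) := by
    have := congrArg (Polynomial.eval (0 : ℂ)) hz
    simp only [eval_sub, eval_mul, eval_prod, eval_C, eval_X, eval_finset_sum,
      zero_mul, mul_zero, sub_zero, zero_sub] at this
    have key : ∀ f : Fin (m+1) → ℂ, (∏ x, -f x) = (-1)^(m+1) * ∏ x, f x := by
      intro f
      calc (∏ x, -f x) = ∏ x : Fin (m+1), (-1) * f x := by simp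
        _ = (∏ _x : Fin (m+1), (-1:ℂ)) * ∏ x, f x := Finset.prod_mul_distrib
        _ = (-1)^(m+1) * ∏ x, f x := by simp
    rw [key, key, ← mul_assoc, mul_comm (1 + Complex.I * (l:ℂ)) ((-1:ℂ)^(m+1)),
      mul_assoc] at this
    exact (mul_left_cancel₀ (pow_ne_zero _ (neg_ne_zero.mpr (one_ne_zero))) this).symm
  -- |Re ∏ z_j| = ∏ |λ_j|
  have hRe : |(∏ j, z j).re| = ∏ j, |lam j| := by
    have hcast : (∏ j, ((lam j : ℝ) : ℂ)) = ((∏ j, lam j : ℝ) : ℂ) := by push_cast; rfl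
    rw [hD, hcast]
    simp only [Complex.mul_re, Complex.add_re, Complex.one_re,
      Complex.I_re, Complex.ofReal_re, Complex.I_im, Complex.ofReal_im, Complex.add_im,
      Complex.one_im, Complex.mul_im]
    norm_num [Finset.abs_prod]
  -- each λ-row of the big product
  have hrow : ∀ k, (∏ j, ‖(lam k : ℂ) - z j‖) =
      l * |lam k| * w k * ∏ k' ∈ Finset.univ.erase k, |lam k - lam k'| := by
    intro k
    rw [← norm_prod, hC k]
    simp only [norm_mul, norm_neg, Complex.norm_I, Complex.norm_real, Real.norm_eq_abs, norm_prod]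
    rw [abs_of_pos hl, abs_of_pos (hw k)]
    have : ∀ k', ‖(lam k : ℂ) - (lam k' : ℂ)‖ = |lam k - lam k'| := by
      intro k'
      rw [show ((lam k : ℂ) - (lam k' : ℂ)) = ((lam k - lam k' : ℝ) : ℂ) by push_cast; ring,
        Complex.norm_real, Real.norm_eq_abs]
    simp only [this]
    ring
  -- big product A
  have hA : (∏ j, ∏ k, ‖z j - (starRingEnd ℂ) (z k)‖) =
      (2 * l) ^ (m + 1) * (∏ j, |lam j|) * (∏ j, w j) *
        ∏ p ∈ Finset.univ.filter (fun p : Fin (m + 1) × Fin (m + 1) => p.1 < p.2),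
          |lam p.1 - lam p.2| ^ 2 := by
    have h1 : ∀ j, (∏ k, ‖z j - (starRingEnd ℂ) (z k)‖) =
        2 * ∏ k, ‖(lam k : ℂ) - z j‖ := by
      intro j
      rw [← norm_prod, hB j, norm_mul]
      simp only [norm_prod]
      norm_num
      refine Finset.prod_congr rfl fun k _ => ?_
      exact (norm_sub_rev _ _)
    calc (∏ j, ∏ k, ‖z j - (starRingEnd ℂ) (z k)‖)
        = ∏ j : Fin (m+1), (2 * ∏ k, ‖(lam k : ℂ) - z j‖) := by
          exact Finset.prod_congr rfl fun j _ => h1 j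
      _ = 2 ^ (m+1) * ∏ j : Fin (m+1), ∏ k, ‖(lam k : ℂ) - z j‖ := by
          rw [Finset.prod_mul_distrib, Finset.prod_const]
          simp
      _ = 2 ^ (m+1) * ∏ k : Fin (m+1), ∏ j, ‖(lam k : ℂ) - z j‖ := by
          rw [Finset.prod_comm]
      _ = 2 ^ (m+1) * ∏ k : Fin (m+1),
            (l * |lam k| * w k * ∏ k' ∈ Finset.univ.erase k, |lam k - lam k'|) := by
          rw [Finset.prod_congr rfl fun k _ => hrow k]
      _ = _ := by
          rw [Finset.prod_mul_distrib, Finset.prod_mul_distrib, Finset.prod_mul_distrib,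
            Finset.prod_const,
            pairsq (m+1) (fun j k => |lam j - lam k|) (fun j k => abs_sub_comm _ _)]
          simp only [Finset.card_univ, Fintype.card_fin]
          ring
  -- positivity of denominator pieces
  have hDpos : (0:ℝ) < ∏ p ∈ Finset.univ.filter
      (fun p : Fin (m + 1) × Fin (m + 1) => p.1 < p.2), |lam p.1 - lam p.2| ^ 2 := by
    refine Finset.prod_pos fun p hp => ?_
    have hne : lam p.1 ≠ lam p.2 := fun h =>
      (Finset.mem_filter.mp hp).2.ne (hlam h)
    exact pow_pos (abs_pos.mpr (sub_ne_zero.mpr hne)) 2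
  have hlamprod : (0:ℝ) < ∏ j, |lam j| :=
    Finset.prod_pos fun j _ => abs_pos.mpr (hlam0 j)
  have h2l : (0:ℝ) < (2 * l) ^ (m+1) := pow_pos (by linarith) _
  rw [hA, hRe, eq_div_iff (mul_pos (mul_pos h2l hDpos) hlamprod).ne']
  ring
end

section
/- Let λ_1,…,λ_m be distinct nonzero reals, w_0,w_1,…,w_m > 0 with Σ_{j=0}^m w_j = 1, l > 0, and let z_1,…,z_m be the roots (with multiplicity) of Q_l(z) := (1+il)∏_{j=1}^m(z−λ_j) − i l q(z), where q(z) := w_0∏_{j=1}^m(z−λ_j) + Σ_{j=1}^m w_j z ∏_{k≠j}(z−λ_k). Then ∏_{j=1}^m z_j = (1 + il − i l w_0) · ∏_{j=1}^m λ_j; in particular w_0 = |Im(∏_{j=1}^m z_j) − l·Re(∏_{j=1}^m z_j)| / |l·Re(∏_{j=1}^m z_j)|. -/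
open Polynomial

/-- with λ_j distinct nonzero reals, weights w₀,w₁,…,w_m > 0 summing to 1,
l > 0, and z_1,…,z_m the roots (with multiplicity) of
Q_l(z) = (1+il)∏(z−λ_j) − i l q(z), q(z) = w₀∏(z−λ_j) + Σ w_j z ∏_{k≠j}(z−λ_k):
∏ z_j = (1 + il − i l w₀)·∏ λ_j, and w₀ = |Im ∏ z_j − l Re ∏ z_j| / |l Re ∏ z_j|. -/
theorem stmt15 (m : ℕ) (lam : Fin m → ℝ) (hlam : Function.Injective lam)
    (hlam0 : ∀ j, lam j ≠ 0)
    (w0 : ℝ) (w : Fin m → ℝ) (hw0 : 0 < w0) (hw : ∀ j, 0 < w j)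
    (hsum : w0 + ∑ j, w j = 1)
    (l : ℝ) (hl : 0 < l) (z : Fin m → ℂ)
    (hz : C (1 + Complex.I * l) * ∏ j, (X - C (lam j : ℂ)) -
        C (Complex.I * l) *
          (C (w0 : ℂ) * ∏ j, (X - C (lam j : ℂ)) +
            ∑ j, C (w j : ℂ) * (X * ∏ k ∈ Finset.univ.erase j, (X - C (lam k : ℂ)))) =
      ∏ j, (X - C (z j))) :
    (∏ j, z j) = (1 + Complex.I * l - Complex.I * l * w0) * ∏ j, (lam j : ℂ) ∧
    w0 = |(∏ j, z j).im - l * (∏ j, z j).re| / |l * (∏ j, z j).re| := by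
  have key : ∀ f : Fin m → ℂ, (∏ j, -f j) = (-1)^m * ∏ j, f j := by
    intro f
    calc (∏ j, -f j) = ∏ j, ((-1) * f j) := by simp
    _ = (-1)^m * ∏ j, f j := by
        rw [Finset.prod_mul_distrib, Finset.prod_const, Finset.card_univ, Fintype.card_fin]
  have h0 := congrArg (Polynomial.eval (0:ℂ)) hz
  simp [eval_prod, eval_finset_sum] at h0
  rw [key, key] at h0
  have hne : ((-1:ℂ))^m ≠ 0 := pow_ne_zero _ (by norm_num)
  have hP : (∏ j, z j) = (1 + Complex.I * l - Complex.I * l * w0) * ∏ j, (lam j : ℂ) := by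
    apply mul_left_cancel₀ hne
    rw [← h0]; ring
  refine ⟨hP, ?_⟩
  set Lr : ℝ := ∏ j, lam j with hLrdef
  have hcast : (∏ j, (lam j : ℂ)) = (Lr : ℂ) := by
    rw [hLrdef]; push_cast; ring
  have hLr : Lr ≠ 0 := Finset.prod_ne_zero_iff.2 fun j _ => hlam0 j
  have hre : (∏ j, z j).re = Lr := by
    rw [hP, hcast]
    simp [Complex.mul_re]
  have him : (∏ j, z j).im = (l - l * w0) * Lr := by
    rw [hP, hcast]
    simp [Complex.mul_im]
  rw [hre, him, show (l - l * w0) * Lr - l * Lr = -((l * Lr) * w0) by ring, abs_neg,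
    abs_mul, mul_comm, mul_div_assoc, div_self (abs_ne_zero.2 (mul_ne_zero (ne_of_gt hl) hLr)),
    mul_one, abs_of_pos hw0]
end

section
/- Let λ_1,…,λ_m be distinct nonzero reals, w_0,w_1,…,w_m > 0 with Σ_{j=0}^m w_j = 1, l > 0, and let z_1,…,z_m be the roots (with multiplicity) of Q_l(z) := (1+il)∏_{j=1}^m(z−λ_j) − i l q(z), where q(z) := w_0∏_{j=1}^m(z−λ_j) + Σ_{j=1}^m w_j z ∏_{k≠j}(z−λ_k). Then ∏_{j=1}^m w_j = ∏_{j,k=1}^m |\bar{z}_j − z_k| / ( (2l)^m · |∏_{j=1}^m λ_j| · ∏_{1≤j<k≤m} |λ_j − λ_k|² ). -/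
open Polynomial


lemma mprod_swap {m : ℕ} (M : Multiset ℂ) (f : Fin m → ℂ → ℂ) :
    ∏ j, (M.map (f j)).prod = (M.map (fun μ => ∏ j, f j μ)).prod := by
  induction M using Multiset.induction_on with
  | empty => simp
  | cons a s ih => simp [Finset.prod_mul_distrib, ih]

lemma key_s16 {m : ℕ} (a b : Fin m → ℂ) (c : ℂ) (R : ℂ[X])
    (h : (∏ j, (X - C (a j))) - (∏ j, (X - C (b j))) = C c * R) :
    ∏ j, R.eval (a j) = ∏ j, R.eval (b j) := by
  by_cases hR : R = 0
  · simp [hR]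
  have hsp := (IsAlgClosed.splits R).eq_prod_roots
  have heval : ∀ x : ℂ, R.eval x = R.leadingCoeff * (R.roots.map (fun μ => x - μ)).prod := by
    intro x
    conv_lhs => rw [hsp]
    simp [Polynomial.eval_multiset_prod, Multiset.map_map, Function.comp]
  have hroot : ∀ μ ∈ R.roots, (∏ j, (a j - μ)) = (∏ j, (b j - μ)) := by
    intro μ hμ
    have h0 : R.eval μ = 0 := (Polynomial.mem_roots hR).1 hμ
    have hA : (∏ j, (X - C (a j))).eval μ = (∏ j, (X - C (b j))).eval μ := by
      have h1 := congrArg (Polynomial.eval μ) h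
      simp only [eval_sub, eval_mul, eval_C, h0, mul_zero] at h1
      exact sub_eq_zero.mp h1
    simp only [eval_prod, eval_sub, eval_X, eval_C] at hA
    calc ∏ j, (a j - μ) = ∏ j, (-1 : ℂ) * (μ - a j) := by
          refine Finset.prod_congr rfl fun j _ => by ring
      _ = (-1:ℂ)^m * ∏ j, (μ - a j) := by
          rw [Finset.prod_mul_distrib, Finset.prod_const, Finset.card_univ, Fintype.card_fin]
      _ = (-1:ℂ)^m * ∏ j, (μ - b j) := by rw [hA]
      _ = ∏ j, (-1 : ℂ) * (μ - b j) := by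
          rw [Finset.prod_mul_distrib, Finset.prod_const, Finset.card_univ, Fintype.card_fin]
      _ = ∏ j, (b j - μ) := by
          refine Finset.prod_congr rfl fun j _ => by ring
  calc ∏ j, R.eval (a j)
      = ∏ j, (R.leadingCoeff * (R.roots.map (fun μ => a j - μ)).prod) := by
        simp_rw [heval]
    _ = R.leadingCoeff ^ m * ∏ j, (R.roots.map (fun μ => a j - μ)).prod := by
        rw [Finset.prod_mul_distrib, Finset.prod_const, Finset.card_univ, Fintype.card_fin]
    _ = R.leadingCoeff ^ m * (R.roots.map (fun μ => ∏ j, (a j - μ))).prod := by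
        rw [mprod_swap]
    _ = R.leadingCoeff ^ m * (R.roots.map (fun μ => ∏ j, (b j - μ))).prod := by
        rw [Multiset.map_congr rfl hroot]
    _ = R.leadingCoeff ^ m * ∏ j, (R.roots.map (fun μ => b j - μ)).prod := by
        rw [mprod_swap]
    _ = ∏ j, (R.leadingCoeff * (R.roots.map (fun μ => b j - μ)).prod) := by
        rw [Finset.prod_mul_distrib, Finset.prod_const, Finset.card_univ, Fintype.card_fin]
    _ = ∏ j, R.eval (b j) := by simp_rw [heval]


lemma pairlem {m : ℕ} (lam : Fin m → ℝ) :
    ∏ j, ∏ k ∈ Finset.univ.erase j, |lam j - lam k| =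
      ∏ p ∈ Finset.univ.filter (fun p : Fin m × Fin m => p.1 < p.2),
        |lam p.1 - lam p.2| ^ 2 := by
  classical
  have h1 : ∏ j, ∏ k ∈ Finset.univ.erase j, |lam j - lam k| =
      ∏ p ∈ Finset.univ.filter (fun p : Fin m × Fin m => p.1 ≠ p.2),
        |lam p.1 - lam p.2| := by
    rw [Finset.prod_filter]
    rw [← Finset.univ_product_univ, Finset.prod_product]
    refine Finset.prod_congr rfl fun j _ => ?_
    rw [← Finset.prod_filter]
    refine Finset.prod_congr ?_ fun _ _ => rfl
    ext k
    simp [Finset.mem_erase, ne_comm, eq_comm, and_comm]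
  have hsplit : (Finset.univ.filter (fun p : Fin m × Fin m => p.1 ≠ p.2)) =
      (Finset.univ.filter (fun p : Fin m × Fin m => p.1 < p.2)) ∪
      (Finset.univ.filter (fun p : Fin m × Fin m => p.2 < p.1)) := by
    ext p
    simp only [Finset.mem_filter, Finset.mem_union, Finset.mem_univ, true_and]
    constructor
    · intro h; rcases lt_or_gt_of_ne h with h | h
      · exact Or.inl h
      · exact Or.inr h
    · rintro (h | h)
      · exact ne_of_lt h
      · exact (ne_of_lt h).symm
  have hdisj : Disjoint (Finset.univ.filter (fun p : Fin m × Fin m => p.1 < p.2))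
      (Finset.univ.filter (fun p : Fin m × Fin m => p.2 < p.1)) := by
    rw [Finset.disjoint_filter]
    intro p _ h1 h2
    exact absurd (h1.trans h2) (lt_irrefl _)
  have h2 : ∏ p ∈ Finset.univ.filter (fun p : Fin m × Fin m => p.2 < p.1),
      |lam p.1 - lam p.2| =
      ∏ p ∈ Finset.univ.filter (fun p : Fin m × Fin m => p.1 < p.2),
        |lam p.1 - lam p.2| := by
    refine Finset.prod_nbij' Prod.swap Prod.swap ?_ ?_ ?_ ?_ ?_
    · intro p hp; simp at hp ⊢; exact hp
    · intro p hp; simp at hp ⊢; exact hp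
    · intro p _; simp
    · intro p _; simp
    · intro p _; exact abs_sub_comm _ _
  rw [h1, hsplit, Finset.prod_union hdisj, h2, ← Finset.prod_mul_distrib]
  refine Finset.prod_congr rfl fun p _ => (sq _).symm

/-- with λ_j distinct nonzero reals, weights w₀,w₁,…,w_m > 0 summing to 1,
l > 0, and z_1,…,z_m the roots (with multiplicity) of
Q_l(z) = (1+il)∏(z−λ_j) − i l q(z), q(z) = w₀∏(z−λ_j) + Σ w_j z ∏_{k≠j}(z−λ_k):
∏_{j=1}^m w_j = ∏_{j,k} |z̄_j − z_k| / ((2l)^m · |∏ λ_j| · ∏_{j<k} |λ_j − λ_k|²). -/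
theorem stmt16 (m : ℕ) (lam : Fin m → ℝ) (hlam : Function.Injective lam)
    (hlam0 : ∀ j, lam j ≠ 0)
    (w0 : ℝ) (w : Fin m → ℝ) (hw0 : 0 < w0) (hw : ∀ j, 0 < w j)
    (hsum : w0 + ∑ j, w j = 1)
    (l : ℝ) (hl : 0 < l) (z : Fin m → ℂ)
    (hz : C (1 + Complex.I * l) * ∏ j, (X - C (lam j : ℂ)) -
        C (Complex.I * l) *
          (C (w0 : ℂ) * ∏ j, (X - C (lam j : ℂ)) +
            ∑ j, C (w j : ℂ) * (X * ∏ k ∈ Finset.univ.erase j, (X - C (lam k : ℂ)))) =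
      ∏ j, (X - C (z j))) :
    ∏ j, w j =
      (∏ j, ∏ k, ‖(starRingEnd ℂ) (z j) - z k‖) /
        ((2 * l) ^ m * |∏ j, lam j| *
          ∏ p ∈ Finset.univ.filter (fun p : Fin m × Fin m => p.1 < p.2),
            |lam p.1 - lam p.2| ^ 2) := by
  classical
  set P : ℂ[X] := ∏ j, (X - C ((lam j : ℝ) : ℂ)) with hP
  set Qp : ℂ[X] := C (w0 : ℂ) * P +
      ∑ j, C (w j : ℂ) * (X * ∏ k ∈ Finset.univ.erase j, (X - C ((lam k : ℝ) : ℂ))) with hQp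
  set R : ℂ[X] := Qp - P with hRdef
  -- rearranged hz
  have hQ : (∏ j, (X - C (z j))) - P = C (-(Complex.I * l)) * R := by
    rw [← hz, hRdef, hQp]
    simp only [map_add, map_one, map_mul, map_neg]
    ring
  have hprod := key_s16 z (fun j => ((lam j : ℝ) : ℂ)) (-(Complex.I * l)) R hQ
  -- eval of P
  have hPeval : ∀ x : ℂ, P.eval x = ∏ k, (x - (lam k : ℂ)) := by
    intro x; simp [hP, eval_prod]
  have hQeval : ∀ x : ℂ, Qp.eval x =
      (w0 : ℂ) * ∏ k, (x - (lam k : ℂ)) +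
      ∑ j, (w j : ℂ) * (x * ∏ k ∈ Finset.univ.erase j, (x - (lam k : ℂ))) := by
    intro x
    simp [hQp, eval_prod, eval_finset_sum, hPeval]
  -- value of R at lam j
  have hRlam : ∀ j, R.eval ((lam j : ℝ) : ℂ) =
      (w j : ℂ) * (lam j : ℂ) * ∏ k ∈ Finset.univ.erase j, ((lam j : ℂ) - (lam k : ℂ)) := by
    intro j
    have hP0 : P.eval ((lam j : ℝ) : ℂ) = 0 := by
      rw [hPeval]
      exact Finset.prod_eq_zero (Finset.mem_univ j) (by simp)
    have hsum0 : ∀ j' ∈ Finset.univ, j' ≠ j →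
        (w j' : ℂ) * ((lam j : ℂ) * ∏ k ∈ Finset.univ.erase j', ((lam j : ℂ) - (lam k : ℂ))) = 0 := by
      intro j' _ hne
      have : ((lam j : ℂ) - (lam j : ℂ)) = 0 := sub_self _
      have hz0 : ∏ k ∈ Finset.univ.erase j', ((lam j : ℂ) - (lam k : ℂ)) = 0 :=
        Finset.prod_eq_zero (Finset.mem_erase.2 ⟨hne.symm, Finset.mem_univ j⟩) (sub_self _)
      rw [hz0]; ring
    have hPz : (∏ k, ((lam j : ℂ) - (lam k : ℂ))) = 0 :=
      Finset.prod_eq_zero (Finset.mem_univ j) (sub_self ((lam j : ℝ) : ℂ))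
    rw [hRdef]
    simp only [eval_sub, hP0, sub_zero, hQeval]
    rw [hPz, Finset.sum_eq_single j hsum0 (by simp)]
    ring
  -- conjugation
  have hPconj : ∀ x : ℂ, P.eval ((starRingEnd ℂ) x) = (starRingEnd ℂ) (P.eval x) := by
    intro x
    rw [hPeval, hPeval, map_prod]
    refine Finset.prod_congr rfl fun k _ => ?_
    rw [map_sub, Complex.conj_ofReal]
  have hQconj : ∀ x : ℂ, Qp.eval ((starRingEnd ℂ) x) = (starRingEnd ℂ) (Qp.eval x) := by
    intro x
    rw [hQeval, hQeval, map_add, map_mul, Complex.conj_ofReal, map_prod, map_sum]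
    congr 1
    · congr 1
      refine Finset.prod_congr rfl fun k _ => ?_
      rw [map_sub, Complex.conj_ofReal]
    · refine Finset.sum_congr rfl fun j _ => ?_
      rw [map_mul, Complex.conj_ofReal, map_mul, map_prod]
      congr 2
      refine Finset.prod_congr rfl fun k _ => ?_
      rw [map_sub, Complex.conj_ofReal]
  -- z j is a root
  have hz0 : ∀ j, (1 + Complex.I * l) * P.eval (z j) - (Complex.I * l) * Qp.eval (z j) = 0 := by
    intro j
    have h1 := congrArg (Polynomial.eval (z j)) hz
    simp only [eval_sub, eval_mul, eval_C, eval_prod, eval_X, ← hP, ← hQp] at h1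
    rw [h1]
    exact Finset.prod_eq_zero (Finset.mem_univ j) (by simp [eval_sub, eval_X, eval_C])
  -- main identity for conjugate evaluation
  have hmain : ∀ j, (∏ k, ((starRingEnd ℂ) (z j) - z k)) =
      (-(2 * Complex.I * l)) * (starRingEnd ℂ) (R.eval (z j)) := by
    intro j
    have h1 := congrArg (Polynomial.eval ((starRingEnd ℂ) (z j))) hz
    simp only [eval_sub, eval_mul, eval_C, eval_prod, eval_X, ← hP, ← hQp] at h1
    have h2 : ∏ k, ((starRingEnd ℂ) (z j) - z k) =
        (1 + Complex.I * l) * P.eval ((starRingEnd ℂ) (z j)) -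
        (Complex.I * l) * Qp.eval ((starRingEnd ℂ) (z j)) := by
      rw [h1]
    rw [h2, hPconj, hQconj]
    have h3 := congrArg (starRingEnd ℂ) (hz0 j)
    simp only [map_sub, map_mul, map_add, map_one, Complex.conj_I, Complex.conj_ofReal,
      map_zero] at h3
    rw [hRdef]
    simp only [eval_sub, map_sub]
    linear_combination h3
  -- abs computation
  have habsfac : ‖(-(2 * Complex.I * l))‖ = 2 * l := by
    simp [norm_mul, abs_of_pos hl]
  have hchain : (∏ j, ∏ k, ‖(starRingEnd ℂ) (z j) - z k‖) =
      (2 * l) ^ m * ‖∏ j, R.eval (z j)‖ := by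
    calc (∏ j, ∏ k, ‖(starRingEnd ℂ) (z j) - z k‖)
        = ∏ j, ‖∏ k, ((starRingEnd ℂ) (z j) - z k)‖ := by
          refine Finset.prod_congr rfl fun j _ => (norm_prod _ _).symm
      _ = ∏ j, ((2 * l) * ‖R.eval (z j)‖) := by
          refine Finset.prod_congr rfl fun j _ => ?_
          rw [hmain j, norm_mul, habsfac, Complex.norm_conj]
      _ = (2 * l) ^ m * ∏ j, ‖R.eval (z j)‖ := by
          rw [Finset.prod_mul_distrib, Finset.prod_const, Finset.card_univ, Fintype.card_fin]
      _ = (2 * l) ^ m * ‖∏ j, R.eval (z j)‖ := by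
          rw [norm_prod]
  -- real value
  have hRreal : (∏ j, R.eval (z j)) =
      ((∏ j, (w j * lam j * ∏ k ∈ Finset.univ.erase j, (lam j - lam k)) : ℝ) : ℂ) := by
    rw [hprod]
    push_cast
    refine Finset.prod_congr rfl fun j _ => ?_
    rw [hRlam j]
  have hnum : (∏ j, ∏ k, ‖(starRingEnd ℂ) (z j) - z k‖) =
      (2 * l) ^ m * ((∏ j, w j) * |∏ j, lam j| *
        ∏ p ∈ Finset.univ.filter (fun p : Fin m × Fin m => p.1 < p.2),
          |lam p.1 - lam p.2| ^ 2) := by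
    rw [hchain, hRreal, Complex.norm_real, Real.norm_eq_abs]
    congr 1
    rw [Finset.abs_prod]
    calc ∏ j, |w j * lam j * ∏ k ∈ Finset.univ.erase j, (lam j - lam k)|
        = ∏ j, (w j * |lam j| * ∏ k ∈ Finset.univ.erase j, |lam j - lam k|) := by
          refine Finset.prod_congr rfl fun j _ => ?_
          rw [abs_mul, abs_mul, Finset.abs_prod, abs_of_pos (hw j)]
      _ = (∏ j, w j) * (∏ j, |lam j|) * ∏ j, ∏ k ∈ Finset.univ.erase j, |lam j - lam k| := by
          rw [Finset.prod_mul_distrib, Finset.prod_mul_distrib]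
      _ = (∏ j, w j) * |∏ j, lam j| *
          ∏ p ∈ Finset.univ.filter (fun p : Fin m × Fin m => p.1 < p.2),
            |lam p.1 - lam p.2| ^ 2 := by
          rw [Finset.abs_prod, pairlem]
  -- denominator nonzero
  have hden : (2 * l) ^ m * |∏ j, lam j| *
      (∏ p ∈ Finset.univ.filter (fun p : Fin m × Fin m => p.1 < p.2),
        |lam p.1 - lam p.2| ^ 2) ≠ 0 := by
    refine mul_ne_zero (mul_ne_zero ?_ ?_) ?_
    · exact pow_ne_zero _ (by positivity)
    · rw [abs_ne_zero]
      exact Finset.prod_ne_zero_iff.2 fun j _ => hlam0 j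
    · refine Finset.prod_ne_zero_iff.2 fun p hp => ?_
      refine pow_ne_zero _ ?_
      rw [abs_ne_zero, sub_ne_zero]
      intro hEq
      have := hlam hEq
      simp only [Finset.mem_filter] at hp
      exact absurd this (ne_of_lt hp.2)
  rw [hnum, eq_div_iff hden]
  ring
end

section
/- Fix m ≥ 1 and l > 0, and let V ⊂ ℝ^{2m} be the open set of points (λ_1,…,λ_m, w_1,…,w_m) with λ_1,…,λ_m distinct and all nonzero, w_j > 0, and Σ_{j=1}^m w_j < 1. With w_0 := 1 − Σ_{j=1}^m w_j and q(z) := w_0∏_{j=1}^m(z−λ_j) + Σ_{j=1}^m w_j z ∏_{k≠j}(z−λ_k), define κ_0,…,κ_{m−1} ∈ ℂ by (1+il)∏_{j=1}^m(z−λ_j) − i l q(z) = z^m + Σ_{j=0}^{m−1} κ_j z^j. Then the map Ψ: V → ℝ^{2m}, Ψ = (Re κ_0,…,Re κ_{m−1}, Im κ_0,…,Im κ_{m−1}), is differentiable and |det DΨ| = l^m · |∏_{j=1}^m λ_j| · ∏_{1≤j<k≤m} |λ_j − λ_k|² at every point of V. -/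
open Polynomial Matrix

namespace Stmt17Aux

variable {m : ℕ}

noncomputable def Pp (lam : Fin m → ℝ) : Polynomial ℝ := ∏ j, (X - C (lam j))
noncomputable def Pe (lam : Fin m → ℝ) (k : Fin m) : Polynomial ℝ :=
  ∏ j ∈ Finset.univ.erase k, (X - C (lam j))

lemma Q_eq (l : ℝ) (lam w : Fin m → ℝ) :
    (C (1 + Complex.I * l) * ∏ j, (X - C (lam j : ℂ)) -
        C (Complex.I * l) *
          (C ((1 - ∑ k, w k : ℝ) : ℂ) * ∏ j, (X - C (lam j : ℂ)) +
            ∑ j, C (w j : ℂ) * (X * ∏ k ∈ Finset.univ.erase j, (X - C (lam k : ℂ))))) =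
      (Pp lam).map (algebraMap ℝ ℂ) -
        C (Complex.I * l) * ∑ k, C ((w k * lam k : ℝ) : ℂ) * (Pe lam k).map (algebraMap ℝ ℂ) := by
  have hPmap : (Pp lam).map (algebraMap ℝ ℂ) = ∏ j, (X - C (lam j : ℂ)) := by
    simp [Pp, Polynomial.map_prod]
  have hPemap : ∀ k, (Pe lam k).map (algebraMap ℝ ℂ) = ∏ j ∈ Finset.univ.erase k, (X - C (lam j : ℂ)) := by
    intro k; simp [Pe, Polynomial.map_prod]
  rw [hPmap]
  simp only [hPemap]
  have hX : ∀ j : Fin m, X * ∏ k ∈ Finset.univ.erase j, (X - C (lam k : ℂ)) =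
      (∏ j, (X - C (lam j : ℂ))) + C (lam j : ℂ) * ∏ k ∈ Finset.univ.erase j, (X - C (lam k : ℂ)) := by
    intro j
    have := Finset.mul_prod_erase Finset.univ (fun k => (X - C (lam k : ℂ))) (Finset.mem_univ j)
    rw [← this]; ring
  simp only [hX]
  have hc : (C (((1 : ℝ) - ∑ k, w k : ℝ) : ℂ) : Polynomial ℂ) = 1 - ∑ k, C ((w k : ℝ) : ℂ) := by
    push_cast
    rw [_root_.map_sub, _root_.map_one, map_sum]
  have hsum : ∑ x : Fin m, C ((w x : ℝ) : ℂ) *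
      ((∏ j, (X - C ((lam j : ℝ) : ℂ))) + C ((lam x : ℝ) : ℂ) * ∏ j ∈ Finset.univ.erase x, (X - C ((lam j : ℝ) : ℂ))) =
      (∑ x : Fin m, C ((w x : ℝ) : ℂ)) * (∏ j, (X - C ((lam j : ℝ) : ℂ))) +
        ∑ x : Fin m, C ((w x * lam x : ℝ) : ℂ) * ∏ j ∈ Finset.univ.erase x, (X - C ((lam j : ℝ) : ℂ)) := by
    rw [Finset.sum_mul, ← Finset.sum_add_distrib]
    refine Finset.sum_congr rfl fun x _ => ?_
    push_cast
    rw [_root_.map_mul]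
    ring
  rw [hsum, hc, _root_.map_add, _root_.map_one]
  ring


noncomputable def Phi (m : ℕ) (l : ℝ) :
    ((Fin m → ℝ) × (Fin m → ℝ)) → ((Fin m → ℝ) × (Fin m → ℝ)) :=
  fun x => (fun j => (Pp x.1).coeff j,
    fun j => -(l * ∑ k, x.2 k * x.1 k * (Pe x.1 k).coeff j))



lemma hasFDerivAt_prod_coeff (s : Finset (Fin m)) (y : Fin m → ℝ) :
    ∀ n : ℕ, HasFDerivAt (fun lam : Fin m → ℝ => (∏ j ∈ s, (X - C (lam j))).coeff n)
      (- ∑ k ∈ s, ((∏ j ∈ s.erase k, (X - C (y j))).coeff n) •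
        (ContinuousLinearMap.proj k : (Fin m → ℝ) →L[ℝ] ℝ)) y := by
  induction s using Finset.induction_on with
  | empty =>
    intro n
    simpa using hasFDerivAt_const ((1 : ℝ[X]).coeff n) y
  | insert a s ha ih =>
    intro n
    have hfun : (fun lam : Fin m → ℝ => (∏ j ∈ insert a s, (X - C (lam j))).coeff n)
        = fun lam : Fin m → ℝ =>
            (X * ∏ j ∈ s, (X - C (lam j))).coeff n - lam a * (∏ j ∈ s, (X - C (lam j))).coeff n := by
      funext lam
      rw [Finset.prod_insert ha, sub_mul, coeff_sub, coeff_C_mul]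
    -- derivative of the first part
    have hg : HasFDerivAt (fun lam : Fin m → ℝ => (X * ∏ j ∈ s, (X - C (lam j))).coeff n)
        (- ∑ k ∈ s, ((X * ∏ j ∈ s.erase k, (X - C (y j))).coeff n) •
          (ContinuousLinearMap.proj k : (Fin m → ℝ) →L[ℝ] ℝ)) y := by
      rcases n with _ | n
      · have h0 : (fun lam : Fin m → ℝ => (X * ∏ j ∈ s, (X - C (lam j))).coeff 0)
            = fun _ => (0 : ℝ) := by
          funext lam; simp [Polynomial.mul_coeff_zero]
        rw [h0]
        have : (- ∑ k ∈ s, ((X * ∏ j ∈ s.erase k, (X - C (y j))).coeff 0) •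
            (ContinuousLinearMap.proj k : (Fin m → ℝ) →L[ℝ] ℝ)) = 0 := by
          simp [Polynomial.mul_coeff_zero]
        rw [this]
        exact hasFDerivAt_const 0 y
      · simp only [Polynomial.coeff_X_mul]
        exact ih n
    have hh := ih n
    have happ : HasFDerivAt (fun lam : Fin m → ℝ => lam a)
        (ContinuousLinearMap.proj a : (Fin m → ℝ) →L[ℝ] ℝ) y :=
      hasFDerivAt_apply (𝕜 := ℝ) (F' := fun _ : Fin m => ℝ) a y
    have hmul := happ.fun_mul' hh
    have hsub := hg.fun_sub hmul
    rw [← hfun] at hsub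
    refine hsub.congr_fderiv ?_
    symm
    ext dl
    simp only [ContinuousLinearMap.neg_apply, ContinuousLinearMap.coe_sub',
      Pi.sub_apply, ContinuousLinearMap.coe_sum', Finset.sum_apply,
      ContinuousLinearMap.coe_smul', Pi.smul_apply, ContinuousLinearMap.proj_apply,
      ContinuousLinearMap.add_apply, ContinuousLinearMap.smul_apply,
      smul_eq_mul]
    rw [Finset.sum_insert ha, Finset.erase_insert ha]
    have herase : ∀ k ∈ s, (insert a s).erase k = insert a (s.erase k) := by
      intro k hk
      exact Finset.erase_insert_of_ne (fun h => ha (h ▸ hk))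
    have hterm : ∀ k ∈ s, ((∏ j ∈ (insert a s).erase k, (X - C (y j))).coeff n)
        = (X * ∏ j ∈ s.erase k, (X - C (y j))).coeff n
          - y a * (∏ j ∈ s.erase k, (X - C (y j))).coeff n := by
      intro k hk
      rw [herase k hk, Finset.prod_insert (fun h => ha (Finset.mem_of_mem_erase h)),
        sub_mul, coeff_sub, coeff_C_mul]
    rw [Finset.sum_congr rfl (fun k hk => by rw [hterm k hk])]
    simp only [ContinuousLinearMap.smulRight_apply, ContinuousLinearMap.proj_apply,
      smul_eq_mul, sub_mul, Finset.sum_sub_distrib, Finset.mul_sum, neg_add, neg_sub, neg_neg,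
      mul_neg, sub_neg_eq_add, op_smul_eq_mul]
    ring_nf
  done




lemma natDegree_Pe (lam : Fin m → ℝ) (k : Fin m) : (Pe lam k).natDegree = m - 1 := by
  rw [Pe, Polynomial.natDegree_prod]
  · simp [Finset.card_erase_of_mem]
  · intro j _; exact X_sub_C_ne_zero _



lemma pair_prod (f : Fin m → Fin m → ℝ) :
    ∏ p ∈ Finset.univ.filter (fun p : Fin m × Fin m => p.1 < p.2), f p.1 p.2
      = ∏ i, ∏ j ∈ Finset.Ioi i, f i j := by
  rw [Finset.prod_filter, ← Finset.univ_product_univ, Finset.prod_product]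
  refine Finset.prod_congr rfl fun i _ => ?_
  rw [← Finset.prod_filter, Finset.filter_lt_eq_Ioi]

lemma erase_abs_prod (g : Fin m → ℝ) :
    ∏ k, ∏ r ∈ Finset.univ.erase k, |g k - g r|
      = (∏ i, ∏ j ∈ Finset.Ioi i, |g i - g j|) ^ 2 := by
  have herase : ∀ k : Fin m, (Finset.univ.erase k) = Finset.Ioi k ∪ Finset.Iio k := by
    intro k; ext r
    simp [Finset.mem_erase, lt_or_lt_iff_ne, ne_comm, or_comm]
  have hdisj : ∀ k : Fin m, Disjoint (Finset.Ioi k) (Finset.Iio k) := by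
    intro k
    exact Finset.disjoint_left.2 fun r hr hr' => absurd (Finset.mem_Ioi.1 hr)
      (not_lt.2 (le_of_lt (Finset.mem_Iio.1 hr')))
  calc ∏ k, ∏ r ∈ Finset.univ.erase k, |g k - g r|
      = ∏ k, ((∏ r ∈ Finset.Ioi k, |g k - g r|) * ∏ r ∈ Finset.Iio k, |g k - g r|) := by
        refine Finset.prod_congr rfl fun k _ => ?_
        rw [herase k, Finset.prod_union (hdisj k)]
    _ = (∏ k, ∏ r ∈ Finset.Ioi k, |g k - g r|) * ∏ k, ∏ r ∈ Finset.Iio k, |g k - g r| := by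
        rw [Finset.prod_mul_distrib]
    _ = (∏ i, ∏ j ∈ Finset.Ioi i, |g i - g j|) ^ 2 := by
        have hswap : ∏ k, ∏ r ∈ Finset.Iio k, |g k - g r|
            = ∏ r, ∏ k ∈ Finset.Ioi r, |g k - g r| := by
          exact Finset.prod_comm' (by intro x y; simp)
        rw [hswap, sq]
        congr 1
        refine Finset.prod_congr rfl fun i _ => Finset.prod_congr rfl fun j _ => ?_
        rw [abs_sub_comm]


lemma abs_det_N (hm : 1 ≤ m) (lam : Fin m → ℝ) (hinj : Function.Injective lam) :
    |Matrix.det (Matrix.of fun k j : Fin m => (Pe lam k).coeff j)|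
      = ∏ i, ∏ j ∈ Finset.Ioi i, |lam j - lam i| := by
  set N : Matrix (Fin m) (Fin m) ℝ := Matrix.of fun k j : Fin m => (Pe lam k).coeff j with hN
  set V : Matrix (Fin m) (Fin m) ℝ := Matrix.vandermonde lam with hV
  have hmul : N * Vᵀ = Matrix.diagonal (fun k => ∏ r ∈ Finset.univ.erase k, (lam k - lam r)) := by
    ext k i
    have hentry : (N * Vᵀ) k i = (Pe lam k).eval (lam i) := by
      rw [Polynomial.eval_eq_sum_range' (lt_of_le_of_lt (le_of_eq (natDegree_Pe lam k))
        (Nat.sub_lt_of_pos_le Nat.one_pos hm)), Matrix.mul_apply]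
      rw [← Fin.sum_univ_eq_sum_range (fun j => (Pe lam k).coeff j * lam i ^ j)]
      rfl
    rw [hentry]
    rcases eq_or_ne k i with rfl | hki
    · rw [Matrix.diagonal_apply_eq]
      rw [Pe, Polynomial.eval_prod]
      simp
    · rw [Matrix.diagonal_apply_ne _ hki]
      rw [Pe, Polynomial.eval_prod]
      refine Finset.prod_eq_zero (Finset.mem_erase.2 ⟨Ne.symm hki, Finset.mem_univ i⟩) ?_
      simp
  have hdetV : V.det = ∏ i, ∏ j ∈ Finset.Ioi i, (lam j - lam i) := Matrix.det_vandermonde lam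
  have hdetVne : V.det ≠ 0 := by
    rw [hdetV]
    refine Finset.prod_ne_zero_iff.2 fun i _ => Finset.prod_ne_zero_iff.2 fun j hj => ?_
    exact sub_ne_zero.2 fun h => absurd (hinj h) (ne_of_gt (Finset.mem_Ioi.1 hj))
  have hdd : N.det * V.det = ∏ k, ∏ r ∈ Finset.univ.erase k, (lam k - lam r) := by
    rw [← Matrix.det_transpose V, ← Matrix.det_mul, hmul, Matrix.det_diagonal]
  have habsV : |V.det| = ∏ i, ∏ j ∈ Finset.Ioi i, |lam j - lam i| := by
    rw [hdetV, Finset.abs_prod]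
    exact Finset.prod_congr rfl fun i _ => Finset.abs_prod _ _
  have habs : |N.det| * |V.det| = (∏ i, ∏ j ∈ Finset.Ioi i, |lam i - lam j|) ^ 2 := by
    rw [← abs_mul, hdd, ← erase_abs_prod lam]
    rw [Finset.abs_prod]
    exact Finset.prod_congr rfl fun k _ => Finset.abs_prod _ _
  have habsV' : |V.det| = ∏ i, ∏ j ∈ Finset.Ioi i, |lam i - lam j| := by
    rw [habsV]
    exact Finset.prod_congr rfl fun i _ => Finset.prod_congr rfl fun j _ => abs_sub_comm _ _
  have hVne' : |V.det| ≠ 0 := abs_ne_zero.2 hdetVne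
  have : |N.det| * |V.det| = |V.det| * |V.det| := by rw [habs, habsV', sq]
  have hNdet : |N.det| = |V.det| := mul_right_cancel₀ hVne' this
  rw [hNdet, habsV]




noncomputable def D1 (lam : Fin m → ℝ) (j : Fin m) :
    ((Fin m → ℝ) × (Fin m → ℝ)) →L[ℝ] ℝ :=
  (- ∑ k, ((∏ i ∈ Finset.univ.erase k, (X - C (lam i))).coeff (j : ℕ)) •
      (ContinuousLinearMap.proj k : (Fin m → ℝ) →L[ℝ] ℝ)).comp
    (ContinuousLinearMap.fst ℝ (Fin m → ℝ) (Fin m → ℝ))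

noncomputable def Dc (lam : Fin m → ℝ) (k j : Fin m) :
    ((Fin m → ℝ) × (Fin m → ℝ)) →L[ℝ] ℝ :=
  (- ∑ r ∈ Finset.univ.erase k,
      ((∏ i ∈ (Finset.univ.erase k).erase r, (X - C (lam i))).coeff (j : ℕ)) •
      (ContinuousLinearMap.proj r : (Fin m → ℝ) →L[ℝ] ℝ)).comp
    (ContinuousLinearMap.fst ℝ (Fin m → ℝ) (Fin m → ℝ))

noncomputable def Dl (k : Fin m) : ((Fin m → ℝ) × (Fin m → ℝ)) →L[ℝ] ℝ :=
  (ContinuousLinearMap.proj k : (Fin m → ℝ) →L[ℝ] ℝ).comp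
    (ContinuousLinearMap.fst ℝ (Fin m → ℝ) (Fin m → ℝ))

noncomputable def Dw (k : Fin m) : ((Fin m → ℝ) × (Fin m → ℝ)) →L[ℝ] ℝ :=
  (ContinuousLinearMap.proj k : (Fin m → ℝ) →L[ℝ] ℝ).comp
    (ContinuousLinearMap.snd ℝ (Fin m → ℝ) (Fin m → ℝ))

noncomputable def D2 (l : ℝ) (lam w : Fin m → ℝ) (j : Fin m) :
    ((Fin m → ℝ) × (Fin m → ℝ)) →L[ℝ] ℝ :=
  -(l • ∑ k, ((w k * lam k) • Dc lam k j +
      ((∏ i ∈ Finset.univ.erase k, (X - C (lam i))).coeff (j : ℕ)) •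
        (w k • Dl k + lam k • Dw k)))

noncomputable def Lmap (l : ℝ) (lam w : Fin m → ℝ) :
    ((Fin m → ℝ) × (Fin m → ℝ)) →L[ℝ] ((Fin m → ℝ) × (Fin m → ℝ)) :=
  (ContinuousLinearMap.pi (fun j => D1 lam j)).prod
    (ContinuousLinearMap.pi (fun j => D2 l lam w j))


lemma hasFDerivAt_Phi (l : ℝ) (x : (Fin m → ℝ) × (Fin m → ℝ)) :
    HasFDerivAt (Phi m l) (Lmap l x.1 x.2) x := by
  have h1 : ∀ j : Fin m, HasFDerivAt
      (fun y : (Fin m → ℝ) × (Fin m → ℝ) => (∏ i, (X - C (y.1 i))).coeff (j : ℕ))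
      (D1 x.1 j) x :=
    fun j => (hasFDerivAt_prod_coeff Finset.univ x.1 (j : ℕ)).comp x hasFDerivAt_fst
  have h2 : ∀ j : Fin m, HasFDerivAt
      (fun y : (Fin m → ℝ) × (Fin m → ℝ) =>
        -(l * ∑ k, y.2 k * y.1 k * (∏ i ∈ Finset.univ.erase k, (X - C (y.1 i))).coeff (j : ℕ)))
      (D2 l x.1 x.2 j) x := by
    intro j
    have hterm : ∀ k : Fin m, HasFDerivAt
        (fun y : (Fin m → ℝ) × (Fin m → ℝ) =>
          y.2 k * y.1 k * (∏ i ∈ Finset.univ.erase k, (X - C (y.1 i))).coeff (j : ℕ))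
        ((x.2 k * x.1 k) • Dc x.1 k j +
          ((∏ i ∈ Finset.univ.erase k, (X - C (x.1 i))).coeff (j : ℕ)) •
            (x.2 k • Dl k + x.1 k • Dw k)) x := by
      intro k
      have hw : HasFDerivAt (fun y : (Fin m → ℝ) × (Fin m → ℝ) => y.2 k) (Dw k) x :=
        (hasFDerivAt_apply (𝕜 := ℝ) (F' := fun _ : Fin m => ℝ) k x.2).comp x hasFDerivAt_snd
      have hlm : HasFDerivAt (fun y : (Fin m → ℝ) × (Fin m → ℝ) => y.1 k) (Dl k) x :=
        (hasFDerivAt_apply (𝕜 := ℝ) (F' := fun _ : Fin m => ℝ) k x.1).comp x hasFDerivAt_fst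
      have hc : HasFDerivAt
          (fun y : (Fin m → ℝ) × (Fin m → ℝ) =>
            (∏ i ∈ Finset.univ.erase k, (X - C (y.1 i))).coeff (j : ℕ))
          (Dc x.1 k j) x :=
        (hasFDerivAt_prod_coeff (Finset.univ.erase k) x.1 (j : ℕ)).comp x hasFDerivAt_fst
      exact (hw.mul hlm).mul hc
    have hsum := HasFDerivAt.fun_sum (fun k (_ : k ∈ Finset.univ) => hterm k)
    have := (hsum.const_mul l).fun_neg
    simpa [D2] using this
  exact HasFDerivAt.prodMk (hasFDerivAt_pi.2 h1) (hasFDerivAt_pi.2 h2)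

lemma Lmap_fst (l : ℝ) (lam w : Fin m → ℝ) (u v : Fin m → ℝ) (j : Fin m) :
    ((Lmap l lam w) (u, v)).1 j = -∑ k, (Pe lam k).coeff (j : ℕ) * u k := by
  simp [Lmap, D1, Pe, ContinuousLinearMap.pi_apply, ContinuousLinearMap.prod_apply]

lemma Lmap_snd_zero (l : ℝ) (lam w : Fin m → ℝ) (v : Fin m → ℝ) (j : Fin m) :
    ((Lmap l lam w) (0, v)).2 j = -(l * ∑ k, lam k * (Pe lam k).coeff (j : ℕ) * v k) := by
  simp [Lmap, D2, Dc, Dl, Dw, Pe, ContinuousLinearMap.pi_apply, ContinuousLinearMap.prod_apply]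
  exact Or.inl (Finset.sum_congr rfl fun k _ => by ring)

lemma abs_det_Lmap (hm : 1 ≤ m) {l : ℝ} (hl : 0 < l) (lam w : Fin m → ℝ)
    (hinj : Function.Injective lam) :
    |LinearMap.det (Lmap (m := m) l lam w).toLinearMap| =
      l ^ m * |∏ j, lam j| * ∏ i, ∏ j ∈ Finset.Ioi i, |lam i - lam j| ^ 2 := by
  classical
  set b : Module.Basis (Fin m ⊕ Fin m) ℝ ((Fin m → ℝ) × (Fin m → ℝ)) :=
    (Pi.basisFun ℝ (Fin m)).prod (Pi.basisFun ℝ (Fin m)) with hb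
  set N : Matrix (Fin m) (Fin m) ℝ := Matrix.of fun k j : Fin m => (Pe lam k).coeff (j : ℕ) with hNdef
  set Amat : Matrix (Fin m) (Fin m) ℝ :=
    Matrix.of fun j k : Fin m => -((Pe lam k).coeff (j : ℕ)) with hAdef
  set Cmat : Matrix (Fin m) (Fin m) ℝ :=
    Matrix.of fun j k : Fin m => -(l * (lam k * (Pe lam k).coeff (j : ℕ))) with hCdef
  set Bmat : Matrix (Fin m) (Fin m) ℝ :=
    Matrix.of fun j k : Fin m =>
      ((Lmap l lam w) ((Pi.basisFun ℝ (Fin m)) k, 0)).2 j with hBdef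
  have hbl : ∀ k : Fin m, b (Sum.inl k) = ((Pi.basisFun ℝ (Fin m)) k, 0) := fun k =>
    Prod.ext (Module.Basis.prod_apply_inl_fst _ _ _) (Module.Basis.prod_apply_inl_snd _ _ _)
  have hbr : ∀ k : Fin m, b (Sum.inr k) = (0, (Pi.basisFun ℝ (Fin m)) k) := fun k =>
    Prod.ext (Module.Basis.prod_apply_inr_fst _ _ _) (Module.Basis.prod_apply_inr_snd _ _ _)
  have hM : LinearMap.toMatrix b b (Lmap (m := m) l lam w).toLinearMap
      = Matrix.fromBlocks Amat 0 Bmat Cmat := by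
    apply Matrix.ext
    intro i i'
    rcases i with j | j <;> rcases i' with k | k <;>
      rw [LinearMap.toMatrix_apply] <;>
      simp only [ContinuousLinearMap.coe_coe, hbl, hbr]
    · -- (inl, inl) : Amat
      rw [Module.Basis.prod_repr_inl, Pi.basisFun_repr, Lmap_fst]
      simp [Matrix.fromBlocks, Pi.single_apply, Finset.sum_ite_eq, hAdef]
    · -- (inl, inr) : 0
      rw [Module.Basis.prod_repr_inl, Pi.basisFun_repr, Lmap_fst]
      simp [Matrix.fromBlocks]
    · -- (inr, inl) : Bmat
      rw [Module.Basis.prod_repr_inr, Pi.basisFun_repr]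
      simp [Matrix.fromBlocks, hBdef]
    · -- (inr, inr) : Cmat
      rw [Module.Basis.prod_repr_inr, Pi.basisFun_repr, Lmap_snd_zero]
      simp [Matrix.fromBlocks, Pi.single_apply, Finset.sum_ite_eq, hCdef]
  have hdet : LinearMap.det (Lmap (m := m) l lam w).toLinearMap = Amat.det * Cmat.det := by
    rw [← LinearMap.det_toMatrix b, hM, Matrix.det_fromBlocks_zero₁₂]
  -- Amat = -Nᵀ
  have hA : Amat = -(N.transpose) := by
    apply Matrix.ext; intro j k; simp [hAdef, hNdef, Matrix.transpose_apply]
  have hC : Cmat = N.transpose * Matrix.diagonal (fun k => -(l * lam k)) := by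
    apply Matrix.ext; intro j k
    simp [hCdef, hNdef, Matrix.mul_diagonal, Matrix.transpose_apply]
    ring
  have habsN : |N.det| = ∏ i, ∏ j ∈ Finset.Ioi i, |lam j - lam i| := abs_det_N hm lam hinj
  have hdetA : |Amat.det| = |N.det| := by
    rw [hA, Matrix.det_neg, Matrix.det_transpose, abs_mul, abs_pow, abs_neg, abs_one, one_pow,
      one_mul]
  have hdetC : |Cmat.det| = |N.det| * (l ^ m * |∏ j, lam j|) := by
    rw [hC, Matrix.det_mul, Matrix.det_transpose, Matrix.det_diagonal, abs_mul]
    congr 1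
    rw [Finset.abs_prod, Finset.abs_prod]
    rw [Finset.prod_congr rfl (fun k _ => (by rw [abs_neg, abs_mul, abs_of_pos hl] :
      |(-(l * lam k))| = l * |lam k|))]
    rw [Finset.prod_mul_distrib, Finset.prod_const, Finset.card_univ, Fintype.card_fin]
  rw [hdet, abs_mul, hdetA, hdetC, habsN]
  have hIoi : ∏ i, ∏ j ∈ Finset.Ioi i, |lam j - lam i|
      = ∏ i, ∏ j ∈ Finset.Ioi i, |lam i - lam j| :=
    Finset.prod_congr rfl fun i _ => Finset.prod_congr rfl fun j _ => abs_sub_comm _ _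
  rw [hIoi]
  have hsq : (∏ i, ∏ j ∈ Finset.Ioi i, |lam i - lam j|) *
      (∏ i, ∏ j ∈ Finset.Ioi i, |lam i - lam j|)
      = ∏ i, ∏ j ∈ Finset.Ioi i, |lam i - lam j| ^ 2 := by
    rw [← Finset.prod_mul_distrib]
    refine Finset.prod_congr rfl fun i _ => ?_
    rw [← Finset.prod_mul_distrib]
    exact Finset.prod_congr rfl fun j _ => (sq _).symm
  calc (∏ i, ∏ j ∈ Finset.Ioi i, |lam i - lam j|) *
        ((∏ i, ∏ j ∈ Finset.Ioi i, |lam i - lam j|) * (l ^ m * |∏ j, lam j|))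
      = ((∏ i, ∏ j ∈ Finset.Ioi i, |lam i - lam j|) *
          (∏ i, ∏ j ∈ Finset.Ioi i, |lam i - lam j|)) * (l ^ m * |∏ j, lam j|) := by ring
    _ = (∏ i, ∏ j ∈ Finset.Ioi i, |lam i - lam j| ^ 2) * (l ^ m * |∏ j, lam j|) := by rw [hsq]
    _ = l ^ m * |∏ j, lam j| * ∏ i, ∏ j ∈ Finset.Ioi i, |lam i - lam j| ^ 2 := by ring


end Stmt17Aux

/-- The map (λ₁,…,λ_m, w₁,…,w_m) ↦ (Re κ₀,…,Re κ_{m−1}, Im κ₀,…,Im κ_{m−1}), where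
z^m + Σ κ_j z^j = (1+il)∏(z−λ_j) − i l q(z) with
q(z) = w₀∏_j(z−λ_j) + Σ_j w_j z ∏_{k≠j}(z−λ_k) and w₀ := 1 − Σ_j w_j. -/
noncomputable def specToCoeffs0 (m : ℕ) (l : ℝ) :
    ((Fin m → ℝ) × (Fin m → ℝ)) → ((Fin m → ℝ) × (Fin m → ℝ)) :=
  fun x =>
    let lam := x.1
    let w := x.2
    let w0 : ℝ := 1 - ∑ k, w k
    let Q : Polynomial ℂ :=
      C (1 + Complex.I * l) * ∏ j, (X - C (lam j : ℂ)) -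
        C (Complex.I * l) *
          (C (w0 : ℂ) * ∏ j, (X - C (lam j : ℂ)) +
            ∑ j, C (w j : ℂ) * (X * ∏ k ∈ Finset.univ.erase j, (X - C (lam k : ℂ))))
    (fun j : Fin m => (Q.coeff (j : ℕ)).re, fun j : Fin m => (Q.coeff (j : ℕ)).im)


open Stmt17Aux in
lemma specToCoeffs0_eq' (m : ℕ) (l : ℝ) (x : (Fin m → ℝ) × (Fin m → ℝ)) :
    specToCoeffs0 m l x = Phi m l x := by
  have hQ := Q_eq l x.1 x.2
  simp only [specToCoeffs0]
  rw [hQ]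
  have hcoeff : ∀ n : ℕ,
      ((map (algebraMap ℝ ℂ) (Pp x.1) -
        C (Complex.I * l) *
          ∑ k, C ((x.2 k * x.1 k : ℝ) : ℂ) * map (algebraMap ℝ ℂ) (Pe x.1 k)).coeff n)
      = (((Pp x.1).coeff n : ℝ) : ℂ) -
        Complex.I * l * (((∑ k, x.2 k * x.1 k * (Pe x.1 k).coeff n : ℝ)) : ℂ) := by
    intro n
    rw [Polynomial.coeff_sub, Polynomial.coeff_C_mul, Polynomial.finset_sum_coeff]
    congr 1
    · simp [Polynomial.coeff_map]
    · push_cast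
      congr 1
      refine Finset.sum_congr rfl fun k _ => ?_
      rw [Polynomial.coeff_C_mul, Polynomial.coeff_map]
      push_cast
      simp [Complex.coe_algebraMap]
  refine Prod.ext ?_ ?_ <;> funext j <;> simp only [Phi, hcoeff] <;>
    simp [Phi, Complex.sub_re, Complex.sub_im, Complex.mul_re, Complex.mul_im,
      Complex.I_re, Complex.I_im, Complex.ofReal_re, Complex.ofReal_im] <;> ring


/-- for fixed l > 0, on the open set of (λ, w) with λ_j distinct and
nonzero, w_j > 0, Σ w_j < 1, the map Ψ = (Re κ, Im κ) is differentiable with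
|det DΨ| = l^m · |∏ λ_j| · ∏_{j<k} |λ_j − λ_k|². -/
theorem stmt17 (m : ℕ) (hm : 1 ≤ m) (l : ℝ) (hl : 0 < l)
    (x : (Fin m → ℝ) × (Fin m → ℝ))
    (hlam : Function.Injective x.1) (hlam0 : ∀ j, x.1 j ≠ 0)
    (hw : ∀ j, 0 < x.2 j) (hw1 : ∑ j, x.2 j < 1) :
    DifferentiableAt ℝ (specToCoeffs0 m l) x ∧
    |LinearMap.det ((fderiv ℝ (specToCoeffs0 m l) x).toLinearMap)| =
      l ^ m * |∏ j, x.1 j| *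
        ∏ p ∈ Finset.univ.filter (fun p : Fin m × Fin m => p.1 < p.2),
          |x.1 p.1 - x.1 p.2| ^ 2 := by
  classical
  have hfun : specToCoeffs0 m l = Stmt17Aux.Phi m l := funext (specToCoeffs0_eq' m l)
  have hL := Stmt17Aux.hasFDerivAt_Phi (m := m) l x
  rw [hfun]
  refine ⟨hL.differentiableAt, ?_⟩
  rw [hL.fderiv]
  rw [Stmt17Aux.abs_det_Lmap hm hl x.1 x.2 hlam]
  rw [Stmt17Aux.pair_prod (fun i j => |x.1 i - x.1 j| ^ 2)]
end
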